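/- arXiv:2010.10464 — 11 statements merged into one kernel-verified Lean document; each statement's English description precedes it below -/
import Mathlib

section
/- A matrix H over a finite field F_q with l rows and columns indexed by 𝓕 is a valid encoder for the (X,ε) cache update problem if and only if it is a valid encoder for the (X,ε) BNSI problem. -/
open Matrix Finset

/-- `H` is a valid encoder for the `(X, ε)` cache update problem: for every node `k`
there is a decoder `D_k` recovering `(w+e)|_{X_k}` from the codeword `H(w+e)` and the
side information `w|_{X_k}`, for all `w` and all updates `e` of Hamming weight at most `ε`. -/
def ValidEncoder {𝓕 𝓚 : Type} [Fintype 𝓕] (F : Type) [Field F] [Fintype F]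
    (X : 𝓚 → Finset 𝓕) (ε : ℕ) {l : ℕ} (H : Matrix (Fin l) 𝓕 F) : Prop :=
  ∀ k : 𝓚, ∃ D : (Fin l → F) → ({f // f ∈ X k} → F) → ({f // f ∈ X k} → F),
    ∀ w e : 𝓕 → F, {f | e f ≠ 0}.ncard ≤ ε →
      D (H.mulVec (w + e)) (fun f => w f.1) = fun f => (w + e) f.1

/-- The optimal codelength `ℓ*(X, ε)`: the least `l` for which some finite field `F`
admits a valid encoder `H ∈ F^{l×F}` for the `(X, ε)` cache update problem. -/
noncomputable def optLen {𝓕 𝓚 : Type} [Fintype 𝓕] (X : 𝓚 → Finset 𝓕) (ε : ℕ) : ℕ :=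
  sInf {l : ℕ | ∃ (F : Type) (inst1 : Field F) (inst2 : Fintype F)
    (H : Matrix (Fin l) 𝓕 F), @ValidEncoder 𝓕 𝓚 _ F inst1 inst2 X ε l H}

/-- `H` is a valid encoder for the `(X, ε)` BNSI problem: for every node `k` there is a
decoder recovering `x|_{X_k}` from the codeword `Hx` and the noisy side information
`x|_{X_k} + ξ`, for all `x` and all noise vectors `ξ` of Hamming weight at most `ε`. -/
def ValidBNSI {𝓕 𝓚 : Type} [Fintype 𝓕] (F : Type) [Field F] [Fintype F]
    (X : 𝓚 → Finset 𝓕) (ε : ℕ) {l : ℕ} (H : Matrix (Fin l) 𝓕 F) : Prop :=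
  ∀ k : 𝓚, ∃ D : (Fin l → F) → ({f // f ∈ X k} → F) → ({f // f ∈ X k} → F),
    ∀ (x : 𝓕 → F) (ξ : {f // f ∈ X k} → F), {f | ξ f ≠ 0}.ncard ≤ ε →
      D (H.mulVec x) (fun f => x f.1 + ξ f) = fun f => x f.1

/-- A matrix `H` over a finite field is a valid encoder for the
`(X, ε)` cache update problem iff it is a valid encoder for the `(X, ε)` BNSI problem. -/
theorem cache_update_iff_BNSI {𝓕 𝓚 : Type} [Fintype 𝓕] (F : Type) [Field F] [Fintype F]
    (X : 𝓚 → Finset 𝓕) (ε : ℕ) (hε : 1 ≤ ε) {l : ℕ} (H : Matrix (Fin l) 𝓕 F) :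
    ValidEncoder F X ε H ↔ ValidBNSI F X ε H := by
  constructor
  · intro h k
    classical
    obtain ⟨D, hD⟩ := h k
    refine ⟨D, ?_⟩
    intro x ξ hξ
    set ξ' : 𝓕 → F := fun f => if h : f ∈ X k then ξ ⟨f, h⟩ else 0 with hξ'def
    have key := hD (x + ξ') (-ξ') ?_
    · have hsum : x + ξ' + -ξ' = x := by ring
      rw [hsum] at key
      have hside : (fun f : {f // f ∈ X k} => (x + ξ') f.1)
          = fun f => x f.1 + ξ f := by
        funext f
        simp [hξ'def, f.2]
      rw [hside] at key
      exact key
    · have himg : {f | (-ξ') f ≠ 0} = Subtype.val '' {f | ξ f ≠ 0} := by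
        ext f
        simp only [Set.mem_setOf_eq, Set.mem_image, Pi.neg_apply, neg_ne_zero, hξ'def]
        constructor
        · intro hf
          by_cases hm : f ∈ X k
          · exact ⟨⟨f, hm⟩, by simpa [hm] using hf, rfl⟩
          · simp [hm] at hf
        · rintro ⟨⟨g, hg⟩, hg0, rfl⟩
          simpa [hg] using hg0
      rw [himg, Set.ncard_image_of_injective _ Subtype.val_injective]
      exact hξ
  · intro h k
    obtain ⟨D, hD⟩ := h k
    refine ⟨D, ?_⟩
    intro w e he
    have key := hD (w + e) (fun f => -e f.1) ?_
    · have hside : (fun f : {f // f ∈ X k} => (w + e) f.1 + -e f.1)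
          = fun f => w f.1 := by
        funext f; simp
      rw [hside] at key
      exact key
    · have hsub : Subtype.val '' {f : {f // f ∈ X k} | -e f.1 ≠ 0} ⊆ {f | e f ≠ 0} := by
        rintro f ⟨⟨g, hg⟩, hg0, rfl⟩
        simpa using hg0
      calc {f : {f // f ∈ X k} | -e f.1 ≠ 0}.ncard
          = (Subtype.val '' {f : {f // f ∈ X k} | -e f.1 ≠ 0}).ncard :=
            (Set.ncard_image_of_injective _ Subtype.val_injective).symm
        _ ≤ {f | e f ≠ 0}.ncard := Set.ncard_le_ncard hsub (Set.toFinite _)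
        _ ≤ ε := he
end

section
/- A matrix H over a finite field F_q with l rows and columns indexed by 𝓕 is a valid encoder for the (X,ε) cache update problem if and only if for every k ∈ 𝓚 and every z ∈ F_q^𝓕 such that the restriction z|_{X_k} is nonzero and has Hamming weight at most 2ε, one has Hz ≠ 0; equivalently, no nonzero linear combination of at most 2ε columns of H indexed by elements of X_k lies in the span of the columns of H indexed by Y_k = 𝓕 \ X_k. -/
open Matrix Finset

/-- `H` is a valid encoder for the `(X, ε)` cache update problem iff for
every node `k` and every vector `z` whose restriction to `X k` is nonzero and has Hamming
weight at most `2ε`, one has `Hz ≠ 0`; i.e. no nonzero combination of at most `2ε` columns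
of `H` indexed by `X k` lies in the span of the columns indexed by `Y k = 𝓕 \ X k`. -/
theorem validEncoder_iff_criterion {𝓕 𝓚 : Type} [Fintype 𝓕] (F : Type) [Field F]
    [Fintype F] (X : 𝓚 → Finset 𝓕) (ε : ℕ) (hε : 1 ≤ ε) {l : ℕ}
    (H : Matrix (Fin l) 𝓕 F) :
    ValidEncoder F X ε H ↔
      ∀ k : 𝓚, ∀ z : 𝓕 → F,
        (∃ f ∈ X k, z f ≠ 0) → {f | f ∈ X k ∧ z f ≠ 0}.ncard ≤ 2 * ε →
          H.mulVec z ≠ 0 := by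
  classical
  constructor
  · rintro hV k z ⟨f0, hf0X, hf0z⟩ hcard hHz
    obtain ⟨D, hD⟩ := hV k
    set S : Finset 𝓕 := (X k).filter (fun f => z f ≠ 0) with hS
    have hf0S : f0 ∈ S := by simp [hS, hf0X, hf0z]
    have hScard : S.card ≤ 2 * ε := by
      have hset : {f | f ∈ X k ∧ z f ≠ 0} = ↑S := by ext f; simp [hS]
      rwa [hset, Set.ncard_coe_finset] at hcard
    obtain ⟨S1, hS1sub, hS1card⟩ := Finset.exists_subset_card_eq (s := S) (min_le_right ε S.card)
    have hScard1 : 1 ≤ S.card := Finset.card_pos.mpr ⟨f0, hf0S⟩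
    have hS1ne : S1.Nonempty := by
      rw [← Finset.card_pos, hS1card]; omega
    obtain ⟨g, hgS1⟩ := hS1ne
    have hgS : g ∈ S := hS1sub hgS1
    have hgX : g ∈ X k := (Finset.mem_filter.mp hgS).1
    have hgz : z g ≠ 0 := (Finset.mem_filter.mp hgS).2
    set S2 : Finset 𝓕 := S \ S1 with hS2
    have hS2card : S2.card ≤ ε := by
      rw [hS2, Finset.card_sdiff_of_subset hS1sub, hS1card]; omega
    set e : 𝓕 → F := fun f => if f ∈ S1 then z f else 0 with he
    set e' : 𝓕 → F := fun f => if f ∈ S2 then -z f else 0 with he'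
    set w' : 𝓕 → F := fun f => if f ∈ S then 0 else -z f with hw'
    have hewt : {f | e f ≠ 0}.ncard ≤ ε := by
      have hsub : {f | e f ≠ 0} ⊆ ↑S1 := by
        intro f hf; by_contra hfn
        simp only [Set.mem_setOf_eq, he] at hf
        rw [if_neg (by simpa using hfn)] at hf; exact hf rfl
      calc {f | e f ≠ 0}.ncard ≤ (↑S1 : Set 𝓕).ncard :=
            Set.ncard_le_ncard hsub (S1.finite_toSet)
        _ = S1.card := Set.ncard_coe_finset _
        _ ≤ ε := by omega
    have he'wt : {f | e' f ≠ 0}.ncard ≤ ε := by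
      have hsub : {f | e' f ≠ 0} ⊆ ↑S2 := by
        intro f hf; by_contra hfn
        simp only [Set.mem_setOf_eq, he'] at hf
        rw [if_neg (by simpa using hfn)] at hf; exact hf rfl
      calc {f | e' f ≠ 0}.ncard ≤ (↑S2 : Set 𝓕).ncard :=
            Set.ncard_le_ncard hsub (S2.finite_toSet)
        _ = S2.card := Set.ncard_coe_finset _
        _ ≤ ε := hS2card
    -- key pointwise identity : w' + e' = (0 + e) - z
    have hkey : w' + e' = (0 : 𝓕 → F) + e - z := by
      funext f
      simp only [Pi.add_apply, Pi.sub_apply, Pi.zero_apply, he, he', hw', zero_add]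
      by_cases h1 : f ∈ S1
      · have h2 : f ∉ S2 := by simp [hS2, h1]
        have hfS : f ∈ S := hS1sub h1
        simp [h1, h2, hfS]
      · by_cases h2 : f ∈ S2
        · have hfS : f ∈ S := (Finset.mem_sdiff.mp h2).1
          simp [h1, h2, hfS]
        · by_cases hfS : f ∈ S
          · -- f ∈ S but neither S1 nor S2 : impossible
            exact absurd (Finset.mem_sdiff.mpr ⟨hfS, h1⟩) h2
          · simp [h1, h2, hfS]
    have hcode : H.mulVec ((0 : 𝓕 → F) + e) = H.mulVec (w' + e') := by
      rw [hkey, Matrix.mulVec_sub, hHz, sub_zero]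
    have hside : (fun f : {f // f ∈ X k} => (0 : 𝓕 → F) f.1)
        = fun f : {f // f ∈ X k} => w' f.1 := by
      funext f
      simp only [Pi.zero_apply, hw']
      by_cases hfS : f.1 ∈ S
      · simp [hfS]
      · have : z f.1 = 0 := by
          by_contra hzf
          exact hfS (Finset.mem_filter.mpr ⟨f.2, hzf⟩)
        simp [hfS, this]
    have h1 := hD 0 e hewt
    have h2 := hD w' e' he'wt
    rw [hside, hcode] at h1
    have hEq : (fun f : {f // f ∈ X k} => ((0 : 𝓕 → F) + e) f.1)
        = fun f : {f // f ∈ X k} => (w' + e') f.1 := by rw [← h1, ← h2]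
    have hg2 : g ∉ S2 := by simp [hS2, hgS1]
    have := congrFun hEq ⟨g, hgX⟩
    simp only [Pi.add_apply, Pi.zero_apply, zero_add, he, he', hw'] at this
    rw [if_pos hgS1, if_pos hgS, if_neg hg2] at this
    simp at this
    exact hgz this
  · intro hC k
    refine ⟨fun c s => if h : ∃ p : (𝓕 → F) × (𝓕 → F),
        {f | p.2 f ≠ 0}.ncard ≤ ε ∧ H.mulVec (p.1 + p.2) = c ∧
          (fun f : {f // f ∈ X k} => p.1 f.1) = s
      then (fun f => (h.choose.1 + h.choose.2) f.1) else fun _ => 0, ?_⟩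
    intro w e hwt
    have hex : ∃ p : (𝓕 → F) × (𝓕 → F),
        {f | p.2 f ≠ 0}.ncard ≤ ε ∧ H.mulVec (p.1 + p.2) = H.mulVec (w + e) ∧
          (fun f : {f // f ∈ X k} => p.1 f.1) = (fun f : {f // f ∈ X k} => w f.1) :=
      ⟨(w, e), hwt, rfl, rfl⟩
    simp only [dif_pos hex]
    obtain ⟨hwt', hcode', hside'⟩ := hex.choose_spec
    set w' := hex.choose.1 with hw'def
    set e' := hex.choose.2 with he'def
    set z : 𝓕 → F := (w' + e') - (w + e) with hz
    have hHz : H.mulVec z = 0 := by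
      rw [hz, Matrix.mulVec_sub, hcode', sub_self]
    have hzero : ∀ f ∈ X k, z f = 0 := by
      by_contra hcon
      push_neg at hcon
      obtain ⟨f1, hf1X, hf1z⟩ := hcon
      refine hC k z ⟨f1, hf1X, hf1z⟩ ?_ hHz
      have hsub : {f | f ∈ X k ∧ z f ≠ 0} ⊆ {f | e' f ≠ 0} ∪ {f | e f ≠ 0} := by
        rintro f ⟨hfX, hfz⟩
        by_contra hfn
        simp only [Set.mem_union, Set.mem_setOf_eq, not_or, not_not] at hfn
        have hwf : w' f = w f := congrFun hside' ⟨f, hfX⟩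
        apply hfz
        simp [hz, hwf, hfn.1, hfn.2]
      calc {f | f ∈ X k ∧ z f ≠ 0}.ncard
          ≤ ({f | e' f ≠ 0} ∪ {f | e f ≠ 0}).ncard :=
            Set.ncard_le_ncard hsub (Set.toFinite _)
        _ ≤ {f | e' f ≠ 0}.ncard + {f | e f ≠ 0}.ncard := Set.ncard_union_le _ _
        _ ≤ 2 * ε := by omega
    funext f
    have h := hzero f.1 f.2
    simp only [hz, Pi.sub_apply] at h
    exact sub_eq_zero.mp h
end

section
/- If H is a valid encoder over a finite field F_q for the (X,ε) cache update problem, then for every k ∈ 𝓚, every set of at most 2ε columns of H indexed by elements of X_k is linearly independent. -/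
open Matrix Finset

/-- If `H` is a valid encoder for the `(X, ε)` cache update problem, then
for every node `k`, every set of at most `2ε` columns of `H` indexed by elements of `X k`
is linearly independent. -/
theorem validEncoder_columns_linearIndependent {𝓕 𝓚 : Type} [Fintype 𝓕] (F : Type)
    [Field F] [Fintype F] (X : 𝓚 → Finset 𝓕) (ε : ℕ) (hε : 1 ≤ ε) {l : ℕ}
    (H : Matrix (Fin l) 𝓕 F) (hH : ValidEncoder F X ε H) :
    ∀ k : 𝓚, ∀ S : Finset 𝓕, S ⊆ X k → S.card ≤ 2 * ε →
      LinearIndependent F (fun f : {x // x ∈ S} => fun i => H i f.1) := by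
  classical
  intro k S hSX hScard
  by_contra hdep
  obtain ⟨g, hg0, i0, hi0⟩ := Fintype.not_linearIndependent_iff.mp hdep
  set c : 𝓕 → F := fun f => if h : f ∈ S then g ⟨f, h⟩ else 0 with hc
  have hcmul : H.mulVec c = 0 := by
    funext j
    have h0 := congrFun hg0 j
    simp only [Finset.sum_apply, Pi.smul_apply, smul_eq_mul, Pi.zero_apply] at h0
    have : H.mulVec c j = ∑ f ∈ S, H j f * c f := by
      rw [show H.mulVec c j = ∑ f : 𝓕, H j f * c f from rfl]
      refine (Finset.sum_subset (Finset.subset_univ S) ?_).symm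
      intro f _ hf
      simp [hc, hf]
    simp only [Pi.zero_apply]
    rw [this, ← Finset.sum_attach S (fun f => H j f * c f)]
    rw [← h0, ← Finset.attach_eq_univ]
    refine Finset.sum_congr rfl ?_
    intro i _
    simp [hc, i.2, mul_comm]
  set T : Finset 𝓕 := S.filter (fun f => c f ≠ 0) with hT
  have hTcard : T.card ≤ 2 * ε := le_trans (Finset.card_filter_le _ _) hScard
  obtain ⟨A, hAT, hAcard⟩ := Finset.exists_subset_card_eq (min_le_right ε T.card)
  have hAle : A.card ≤ ε := by rw [hAcard]; exact min_le_left _ _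
  have hdiff : (T \ A).card ≤ ε := by
    rw [Finset.card_sdiff_of_subset hAT, hAcard]
    omega
  set e1 : 𝓕 → F := fun f => if f ∈ A then c f else 0 with he1
  set e2 : 𝓕 → F := fun f => e1 f - c f with he2
  have hsupp1 : {f | e1 f ≠ 0}.ncard ≤ ε := by
    refine le_trans (le_trans (Set.ncard_le_ncard ?_ A.finite_toSet) ?_) hAle
    · intro f hf
      simp only [he1, Set.mem_setOf_eq] at hf
      rw [Finset.mem_coe]
      by_contra hfA
      simp [hfA] at hf
    · rw [Set.ncard_coe_finset]
  have hsupp2 : {f | e2 f ≠ 0}.ncard ≤ ε := by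
    refine le_trans (le_trans (Set.ncard_le_ncard ?_ (T \ A).finite_toSet) ?_) hdiff
    · intro f hf
      simp only [he2, he1, Set.mem_setOf_eq] at hf
      by_cases hfA : f ∈ A
      · simp [hfA] at hf
      · simp only [hfA, if_false, zero_sub, neg_ne_zero] at hf
        simp only [Finset.coe_sdiff, Set.mem_diff, Finset.mem_coe]
        refine ⟨?_, hfA⟩
        rw [hT, Finset.mem_filter]
        refine ⟨?_, hf⟩
        by_contra hfS
        simp [hc, hfS] at hf
    · rw [Set.ncard_coe_finset]
  have hmuleq : H.mulVec e1 = H.mulVec e2 := by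
    have : e2 = e1 - c := by funext f; simp [he2]
    rw [this, Matrix.mulVec_sub, hcmul, sub_zero]
  obtain ⟨D, hD⟩ := hH k
  have h1 := hD 0 e1 hsupp1
  have h2 := hD 0 e2 hsupp2
  simp only [zero_add] at h1 h2
  have heq : (fun f : {f // f ∈ X k} => e1 f.1) = fun f => e2 f.1 := by
    rw [← h1, ← h2, hmuleq]
  have hi0S : i0.1 ∈ X k := hSX i0.2
  have := congrFun heq ⟨i0.1, hi0S⟩
  simp only [he2] at this
  have hc0 : c i0.1 = 0 := sub_eq_self.mp this.symm
  rw [hc] at hc0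
  simp only [i0.2, dif_pos] at hc0
  exact hi0 (by rwa [show (⟨i0.1, i0.2⟩ : {x // x ∈ S}) = i0 from rfl] at hc0)
end

section
/- Assume |X_k| = Z for every k ∈ 𝓚 and ε ≥ 1. Then the optimal codelength of the (X,ε) cache update problem satisfies ℓ*(X,ε) ≤ F − max(Z − 2ε, 0). -/
open Matrix Finset

lemma coeffs_eq_zero_of_many_roots {𝔽 : Type} [Field 𝔽] {𝓕 : Type} [Fintype 𝓕]
    (φ : 𝓕 → 𝔽) (hφ : Function.Injective φ) {d : ℕ} (c : Fin d → 𝔽)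
    (S : Finset 𝓕) (hd : d ≤ S.card)
    (hz : ∀ f ∈ S, ∑ i : Fin d, c i * φ f ^ (i : ℕ) = 0) : ∀ i, c i = 0 := by
  classical
  rcases Nat.eq_zero_or_pos d with hd0 | hd0
  · subst hd0; exact fun i => i.elim0
  set p : Polynomial 𝔽 := ∑ i : Fin d, Polynomial.C (c i) * Polynomial.X ^ (i : ℕ) with hp
  have hev : ∀ f, p.eval (φ f) = ∑ i : Fin d, c i * φ f ^ (i : ℕ) := by
    intro f; simp [hp, Polynomial.eval_finset_sum]
  have hcoeff : ∀ i : Fin d, p.coeff i = c i := by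
    intro i
    rw [hp, Polynomial.finset_sum_coeff]
    rw [Finset.sum_eq_single i]
    · simp
    · intro j _ hj
      have hji : ¬ ((i : ℕ) = (j : ℕ)) := fun h => hj (Fin.ext h.symm)
      simp only [Polynomial.coeff_C_mul, Polynomial.coeff_X_pow, if_neg hji, mul_zero]
    · simp
  have hdeg : p.degree < (d : WithBot ℕ) := by
    apply lt_of_le_of_lt (Polynomial.degree_sum_le _ _)
    rw [Finset.sup_lt_iff (by exact_mod_cast WithBot.bot_lt_coe d)]
    intro i _
    calc (Polynomial.C (c i) * Polynomial.X ^ (i : ℕ)).degree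
        ≤ ((i : ℕ) : WithBot ℕ) := by
          simpa using (Polynomial.degree_C_mul_X_pow_le (i : ℕ) (c i))
      _ < (d : WithBot ℕ) := by exact_mod_cast i.isLt
  have hp0 : p = 0 := by
    by_contra hne
    have hnat : p.natDegree < d := (Polynomial.natDegree_lt_iff_degree_lt hne).2 hdeg
    have himg : S.image φ ⊆ p.roots.toFinset := by
      intro x hx
      rcases Finset.mem_image.1 hx with ⟨f, hf, rfl⟩
      rw [Multiset.mem_toFinset, Polynomial.mem_roots hne]
      exact (hev f).trans (hz f hf)
    have h1 : S.card ≤ p.roots.toFinset.card := by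
      rw [← Finset.card_image_of_injective S hφ]
      exact Finset.card_le_card himg
    have h2 : p.roots.toFinset.card ≤ Multiset.card p.roots := Multiset.toFinset_card_le _
    have h3 : Multiset.card p.roots ≤ p.natDegree := Polynomial.card_roots' p
    omega
  intro i
  have := hcoeff i
  rw [hp0, Polynomial.coeff_zero] at this
  exact this.symm

/-- If `|X k| = Z` for every node `k` and `ε ≥ 1`, then the optimal
codelength satisfies `ℓ*(X, ε) ≤ F − max(Z − 2ε, 0)` (truncated subtraction in `ℕ`). -/
theorem optLen_le_MDS_bound {𝓕 𝓚 : Type} [Fintype 𝓕] (X : 𝓚 → Finset 𝓕) (ε Z : ℕ)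
    (hε : 1 ≤ ε) (hZ : ∀ k, (X k).card = Z) :
    optLen X ε ≤ Fintype.card 𝓕 - (Z - 2 * ε) := by
  classical
  unfold optLen
  apply Nat.sInf_le
  rcases isEmpty_or_nonempty 𝓚 with hK | hK
  · haveI : Fact (Nat.Prime 2) := ⟨Nat.prime_two⟩
    exact ⟨ZMod 2, inferInstance, inferInstance, 0, fun k => isEmptyElim k⟩
  set F := Fintype.card 𝓕 with hF
  set d := Z - 2 * ε with hd
  obtain ⟨k₀⟩ := hK
  have hZF : Z ≤ F := by rw [← hZ k₀]; exact Finset.card_le_univ (X k₀)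
  have hdF : d ≤ F := le_trans (Nat.sub_le _ _) hZF
  obtain ⟨q, hqF, hq⟩ := Nat.exists_infinite_primes F
  haveI : Fact q.Prime := ⟨hq⟩
  set 𝔽 := ZMod q with h𝔽
  have hcard : Fintype.card 𝓕 ≤ Fintype.card 𝔽 := by
    show Fintype.card 𝓕 ≤ Fintype.card (ZMod q)
    rw [ZMod.card]; exact hqF
  obtain ⟨φ⟩ : Nonempty (𝓕 ↪ 𝔽) := Function.Embedding.nonempty_of_card_le hcard
  set L : (Fin d → 𝔽) →ₗ[𝔽] (𝓕 → 𝔽) :=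
    { toFun := fun c f => ∑ i : Fin d, c i * φ f ^ (i : ℕ),
      map_add' := by intro a b; funext f; simp [add_mul, Finset.sum_add_distrib]
      map_smul' := by intro m a; funext f; simp [Finset.mul_sum, mul_assoc]; rw [Finset.mul_sum] } with hL
  have hLapp : ∀ c f, L c f = ∑ i : Fin d, c i * φ f ^ (i : ℕ) := fun c f => rfl
  have hLz : ∀ c, L c = 0 → c = 0 := by
    intro c hc
    funext i
    refine coeffs_eq_zero_of_many_roots φ φ.injective c Finset.univ ?_ ?_ i
    · simpa using hdF
    · intro f _
      have := congrFun hc f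
      simpa [hLapp] using this
  have hLinj : Function.Injective L := by
    rw [← LinearMap.ker_eq_bot]
    exact LinearMap.ker_eq_bot'.mpr hLz
  set C := LinearMap.range L with hC
  have hrank : Module.finrank 𝔽 C = d := by
    rw [LinearMap.finrank_range_of_inj hLinj, Module.finrank_fin_fun]
  have hq1 : Module.finrank 𝔽 ((𝓕 → 𝔽) ⧸ C) + d = F := by
    rw [← hrank, Submodule.finrank_quotient_add_finrank C, Module.finrank_pi]
  have hq2 : Module.finrank 𝔽 ((𝓕 → 𝔽) ⧸ C) = Module.finrank 𝔽 (Fin (F - d) → 𝔽) := by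
    rw [Module.finrank_fin_fun]; omega
  obtain ⟨eqv⟩ := FiniteDimensional.nonempty_linearEquiv_of_finrank_eq hq2
  set T : (𝓕 → 𝔽) →ₗ[𝔽] (Fin (F - d) → 𝔽) := eqv.toLinearMap ∘ₗ C.mkQ with hT
  have hkerT : ∀ u, T u = 0 → u ∈ C := by
    intro u hu
    have h1 : C.mkQ u = 0 := by
      apply eqv.injective
      simpa [hT] using hu
    rwa [Submodule.mkQ_apply, Submodule.Quotient.mk_eq_zero] at h1
  set H : Matrix (Fin (F - d)) 𝓕 𝔽 := fun i f => T (Pi.single f 1) i with hHdef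
  have hH : ∀ u, H.mulVec u = T u := by
    intro u
    have hu : u = ∑ f : 𝓕, u f • (Pi.single f 1 : 𝓕 → 𝔽) := by
      funext g
      simp [Finset.sum_apply, Pi.single_apply, mul_comm]
    funext i
    calc H.mulVec u i = ∑ f : 𝓕, T (Pi.single f 1) i * u f := rfl
      _ = T u i := by
          conv_rhs => rw [hu]
          rw [map_sum]
          simp [Finset.sum_apply, mul_comm]
  refine ⟨𝔽, inferInstance, inferInstance, H, ?_⟩
  intro k
  set P : (Fin (F - d) → 𝔽) → ({f // f ∈ X k} → 𝔽) → (𝓕 → 𝔽) → Prop :=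
    fun y s u => H.mulVec u = y ∧ ∃ w e : 𝓕 → 𝔽, u = w + e ∧
      (∀ f : {f // f ∈ X k}, w f.1 = s f) ∧ {f | e f ≠ 0}.ncard ≤ ε with hP
  refine ⟨fun y s => if h : ∃ u, P y s u then fun f => h.choose f.1 else 0, ?_⟩
  intro w e he
  have hex : ∃ u, P (H.mulVec (w + e)) (fun f => w f.1) u :=
    ⟨w + e, rfl, w, e, rfl, fun _ => rfl, he⟩
  beta_reduce
  rw [dif_pos hex]
  obtain ⟨hmul, w', e', huw, hws, he'⟩ := hex.choose_spec
  set v : 𝓕 → 𝔽 := (w + e) - hex.choose with hv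
  have hvC : v ∈ C := by
    apply hkerT
    have : T v = T (w + e) - T hex.choose := map_sub T _ _
    rw [this, ← hH, ← hH, hmul, sub_self]
  obtain ⟨c, hc⟩ := hvC
  have hvk : ∀ f (hf : f ∈ X k), v f = e f - e' f := by
    intro f hf
    have hwf : w' f = w f := hws ⟨f, hf⟩
    simp only [hv, huw, Pi.sub_apply, Pi.add_apply, hwf]
    ring
  have hfin1 : {f | e f ≠ 0}.Finite := Set.toFinite _
  have hfin2 : {f | e' f ≠ 0}.Finite := Set.toFinite _
  have hsub : (X k).filter (fun f => ¬ v f = 0) ⊆ hfin1.toFinset ∪ hfin2.toFinset := by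
    intro f hf
    rcases Finset.mem_filter.1 hf with ⟨hfk, hvne⟩
    rw [Finset.mem_union, Set.Finite.mem_toFinset, Set.Finite.mem_toFinset]
    by_contra hcon
    push_neg at hcon
    simp only [Set.mem_setOf_eq, not_not] at hcon
    exact hvne (by rw [hvk f hfk, hcon.1, hcon.2, sub_zero])
  have hNle : ((X k).filter (fun f => ¬ v f = 0)).card ≤ 2 * ε := by
    calc ((X k).filter (fun f => ¬ v f = 0)).card
        ≤ (hfin1.toFinset ∪ hfin2.toFinset).card := Finset.card_le_card hsub
      _ ≤ hfin1.toFinset.card + hfin2.toFinset.card := Finset.card_union_le _ _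
      _ ≤ ε + ε := by
          have h1 : hfin1.toFinset.card ≤ ε := by
            rw [← Set.ncard_eq_toFinset_card _ hfin1]; exact he
          have h2 : hfin2.toFinset.card ≤ ε := by
            rw [← Set.ncard_eq_toFinset_card _ hfin2]; exact he'
          omega
      _ = 2 * ε := by ring
  have hZc : d ≤ ((X k).filter (fun f => v f = 0)).card := by
    have hsplit := Finset.card_filter_add_card_filter_not
      (s := X k) (p := fun f => v f = 0)
    rw [hZ k] at hsplit
    omega
  have hc0 : ∀ i, c i = 0 :=
    coeffs_eq_zero_of_many_roots φ φ.injective c _ hZc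
      (fun f hf => by
        have hvf : v f = 0 := (Finset.mem_filter.1 hf).2
        rw [← hLapp, hc, hvf])
  have hv0 : ∀ f, v f = 0 := by
    intro f
    rw [← hc, hLapp]
    simp [hc0]
  funext f
  have hvf : v f.1 = 0 := hv0 f.1
  rw [hv] at hvf
  have := sub_eq_zero.mp hvf
  exact this.symm
end

section
/- Assume |X_k| = Z for every k ∈ 𝓚 and ε ≥ 1, and let l = F − max(Z − 2ε, 0). If H is an l × F matrix over a finite field F_q (columns indexed by 𝓕) such that every set of l columns of H is linearly independent, then H is a valid encoder for the (X,ε) cache update problem. -/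
open Matrix Finset

lemma zero_of_small_support {𝓕 : Type} [Fintype 𝓕] {F : Type} [Field F]
    {l : ℕ} (H : Matrix (Fin l) 𝓕 F)
    (hind : ∀ S : Finset 𝓕, S.card = l →
      LinearIndependent F (fun f : {x // x ∈ S} => fun i => H i f.1))
    (hl : l ≤ Fintype.card 𝓕)
    (v : 𝓕 → F) (hsupp : {f | v f ≠ 0}.ncard ≤ l)
    (hv : H.mulVec v = 0) : v = 0 := by
  classical
  have hsupp' : (Finset.univ.filter (fun f => v f ≠ 0)).card ≤ l := by
    have : {f | v f ≠ 0}.ncard = (Finset.univ.filter (fun f => v f ≠ 0)).card := by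
      rw [Set.ncard_eq_toFinset_card']
      congr 1
      ext f; simp
    omega
  obtain ⟨S, hSsub, hScard⟩ :=
    Finset.exists_superset_card_eq hsupp' (by simpa using hl)
  have hli := hind S hScard
  rw [Fintype.linearIndependent_iff] at hli
  have hzero : ∀ f : {x // x ∈ S}, v f.1 = 0 := by
    apply hli (fun f => v f.1)
    funext i
    have h1 : (∑ f : {x // x ∈ S}, (fun g : {x // x ∈ S} => v g.1) f • (fun j => H j f.1)) i
        = ∑ f ∈ S, v f * H i f := by
      rw [Finset.sum_apply]
      rw [← Finset.sum_attach S (fun f => v f * H i f)]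
      rfl
    rw [h1]
    have h2 : ∑ f ∈ S, v f * H i f = ∑ f, v f * H i f := by
      apply Finset.sum_subset (Finset.subset_univ S)
      intro f _ hf
      have : v f = 0 := by
        by_contra h
        exact hf (hSsub (by simp [h]))
      simp [this]
    rw [h2]
    have := congrFun hv i
    simpa [Matrix.mulVec, dotProduct, mul_comm] using this
  funext f
  by_cases hf : f ∈ S
  · exact hzero ⟨f, hf⟩
  · by_contra h
    exact hf (hSsub (by simpa using h))


/-- With `|X k| = Z` for all `k`, `ε ≥ 1` and `l = F − max(Z − 2ε, 0)`:
if `H` is an `l × F` matrix over a finite field such that every set of `l` columns of `H`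
is linearly independent, then `H` is a valid encoder for the `(X, ε)` cache update
problem. -/
theorem mds_encoder_valid {𝓕 𝓚 : Type} [Fintype 𝓕] (F : Type) [Field F] [Fintype F]
    (X : 𝓚 → Finset 𝓕) (ε Z : ℕ) (hε : 1 ≤ ε) (hZ : ∀ k, (X k).card = Z)
    (H : Matrix (Fin (Fintype.card 𝓕 - (Z - 2 * ε))) 𝓕 F)
    (hind : ∀ S : Finset 𝓕, S.card = Fintype.card 𝓕 - (Z - 2 * ε) →
      LinearIndependent F (fun f : {x // x ∈ S} => fun i => H i f.1)) :
    ValidEncoder F X ε H := by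
  classical
  intro k
  refine ⟨fun c s => if h : ∃ u : 𝓕 → F, H.mulVec u = c ∧ ∃ w e : 𝓕 → F,
      u = w + e ∧ {f | e f ≠ 0}.ncard ≤ ε ∧ ∀ f : {f // f ∈ X k}, w f.1 = s f
    then fun f => h.choose f.1 else fun _ => 0, ?_⟩
  intro w e he
  have hex : ∃ u : 𝓕 → F, H.mulVec u = H.mulVec (w + e) ∧ ∃ w' e' : 𝓕 → F,
      u = w' + e' ∧ {f | e' f ≠ 0}.ncard ≤ ε ∧
      ∀ f : {f // f ∈ X k}, w' f.1 = (fun f : {f // f ∈ X k} => w f.1) f :=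
    ⟨w + e, rfl, w, e, rfl, he, fun f => rfl⟩
  beta_reduce
  rw [dif_pos hex]
  obtain ⟨hmul, w', e', hu, he', hw'⟩ := hex.choose_spec
  have hueq : hex.choose = w + e := by
    have hker : H.mulVec (hex.choose - (w + e)) = 0 := by
      rw [Matrix.mulVec_sub, hmul, sub_self]
    have hcard : ∀ g : 𝓕 → F,
        {f | g f ≠ 0}.ncard = (Finset.univ.filter (fun f => g f ≠ 0)).card := by
      intro g
      rw [Set.ncard_eq_toFinset_card']
      congr 1
      ext f; simp
    set v : 𝓕 → F := hex.choose - (w + e) with hvdef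
    have hsub : Finset.univ.filter (fun f => v f ≠ 0) ⊆
        (Finset.univ \ X k) ∪ ((Finset.univ.filter (fun f => e' f ≠ 0) ∪
          Finset.univ.filter (fun f => e f ≠ 0)) ∩ X k) := by
      intro f hf
      simp only [Finset.mem_filter, Finset.mem_univ, true_and] at hf
      by_cases hfk : f ∈ X k
      · have hwf : w' f = w f := hw' ⟨f, hfk⟩
        have hvf : v f = e' f - e f := by
          have hcf : hex.choose f = w' f + e' f := congrFun hu f
          simp only [hvdef, Pi.sub_apply, Pi.add_apply, hcf, hwf]
          ring
        rw [Finset.mem_union, Finset.mem_inter]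
        right
        refine ⟨?_, hfk⟩
        simp only [Finset.mem_union, Finset.mem_filter, Finset.mem_univ, true_and]
        by_contra hc
        push_neg at hc
        rw [hvf, hc.1, hc.2, sub_zero] at hf
        exact hf rfl
      · rw [Finset.mem_union, Finset.mem_sdiff]
        left
        exact ⟨Finset.mem_univ f, hfk⟩
    have hZF : Z ≤ Fintype.card 𝓕 := hZ k ▸ Finset.card_le_univ (X k)
    have h1 : (Finset.univ \ X k).card = Fintype.card 𝓕 - Z := by
      rw [Finset.card_sdiff_of_subset (Finset.subset_univ _), hZ k, Finset.card_univ]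
    have hEe' : (Finset.univ.filter (fun f => e' f ≠ 0)).card ≤ ε := by
      rw [← hcard]; exact he'
    have hEe : (Finset.univ.filter (fun f => e f ≠ 0)).card ≤ ε := by
      rw [← hcard]; exact he
    set B := (Finset.univ.filter (fun f => e' f ≠ 0) ∪
        Finset.univ.filter (fun f => e f ≠ 0)) ∩ X k with hB
    have h2 : B.card ≤ 2 * ε := by
      calc B.card ≤ (Finset.univ.filter (fun f => e' f ≠ 0) ∪
          Finset.univ.filter (fun f => e f ≠ 0)).card :=
            Finset.card_le_card Finset.inter_subset_left
        _ ≤ _ + _ := Finset.card_union_le _ _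
        _ ≤ 2 * ε := by omega
    have h3 : B.card ≤ Z := by
      rw [← hZ k]
      exact Finset.card_le_card Finset.inter_subset_right
    have htot : (Finset.univ.filter (fun f => v f ≠ 0)).card ≤
        Fintype.card 𝓕 - (Z - 2 * ε) := by
      calc (Finset.univ.filter (fun f => v f ≠ 0)).card
          ≤ ((Finset.univ \ X k) ∪ B).card := Finset.card_le_card hsub
        _ ≤ (Finset.univ \ X k).card + B.card := Finset.card_union_le _ _
        _ ≤ Fintype.card 𝓕 - (Z - 2 * ε) := by omega
    have hv0 : v = 0 := by
      apply zero_of_small_support H hind (Nat.sub_le _ _) v _ hker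
      rw [hcard]; exact htot
    have := sub_eq_zero.mp (hvdef ▸ hv0)
    exact this
  funext f
  rw [hueq]
end

section
/- Suppose ε ≥ 1, every subfile index f ∈ 𝓕 is cached at exactly r nodes, where 1 ≤ r < K (i.e., |{k ∈ 𝓚 : f ∈ X_k}| = r for every f), and for any two distinct f₁, f₂ ∈ 𝓕 the node sets {k : f₁ ∈ X_k} and {k : f₂ ∈ X_k} are distinct. Then there exists B₀ such that for every B ≥ B₀ there exists a valid encoder for the (X,ε) cache update problem over the finite field with 2^B elements having exactly 2ε(K − r) + 1 rows. -/
open Matrix Finset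

set_option linter.unusedSectionVars false
set_option maxHeartbeats 1000000

open Finset Polynomial in

private lemma sum_range_two_pow (n : ℕ) : ∑ i ∈ Finset.range n, 2 ^ i = 2 ^ n - 1 := by
  induction n with
  | zero => simp
  | succ n ih => rw [Finset.sum_range_succ, ih]; have := Nat.one_le_two_pow (n := n); omega

private lemma two_pow_sum_inj : ∀ N (s t : Finset ℕ), (∑ i ∈ s, 2 ^ i) = N → (∑ i ∈ t, 2 ^ i) = N → s = t := by
  intro N
  induction N using Nat.strong_induction_on with
  | _ N ih =>
    intro s t hs ht
    rcases Nat.eq_zero_or_pos N with h0 | hpos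
    · subst h0
      have hs' : s = ∅ := by
        by_contra hne
        obtain ⟨a, ha⟩ := Finset.nonempty_iff_ne_empty.mpr hne
        have h1 : 2 ^ a ≤ 0 := hs ▸ Finset.single_le_sum (f := fun i => 2 ^ i) (fun i _ => Nat.zero_le _) ha
        have h2 : 0 < 2 ^ a := by positivity
        omega
      have ht' : t = ∅ := by
        by_contra hne
        obtain ⟨a, ha⟩ := Finset.nonempty_iff_ne_empty.mpr hne
        have h1 : 2 ^ a ≤ 0 := ht ▸ Finset.single_le_sum (f := fun i => 2 ^ i) (fun i _ => Nat.zero_le _) ha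
        have h2 : 0 < 2 ^ a := by positivity
        omega
      rw [hs', ht']
    · have hsne : s.Nonempty := by
        by_contra hne
        rw [Finset.not_nonempty_iff_eq_empty.mp hne] at hs; simp at hs; omega
      have htne : t.Nonempty := by
        by_contra hne
        rw [Finset.not_nonempty_iff_eq_empty.mp hne] at ht; simp at ht; omega
      have key : ∀ u : Finset ℕ, (hu : u.Nonempty) → (∑ i ∈ u, 2 ^ i) = N →
          2 ^ (u.max' hu) ≤ N ∧ N < 2 ^ (u.max' hu + 1) := by
        intro u hu hN
        constructor
        · exact hN ▸ Finset.single_le_sum (f := fun i => 2 ^ i) (fun i _ => Nat.zero_le _) (u.max'_mem hu)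
        · have hsub : u ⊆ Finset.range (u.max' hu + 1) := by
            intro i hi; exact Finset.mem_range.mpr (Nat.lt_succ_of_le (u.le_max' i hi))
          calc N ≤ ∑ i ∈ Finset.range (u.max' hu + 1), 2 ^ i :=
                hN ▸ Finset.sum_le_sum_of_subset hsub
            _ = 2 ^ (u.max' hu + 1) - 1 := sum_range_two_pow _
            _ < 2 ^ (u.max' hu + 1) := by have := Nat.one_le_two_pow (n := u.max' hu + 1); omega
      obtain ⟨hs1, hs2⟩ := key s hsne hs
      obtain ⟨ht1, ht2⟩ := key t htne ht
      have hmax : s.max' hsne = t.max' htne := by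
        by_contra hne
        rcases Nat.lt_or_ge (s.max' hsne) (t.max' htne) with h | h
        · have h3 : 2 ^ (t.max' htne) < 2 ^ (s.max' hsne + 1) := lt_of_le_of_lt ht1 hs2
          have := Nat.pow_lt_pow_iff_right (by norm_num : 1 < 2) |>.mp h3; omega
        · rcases Nat.lt_or_ge (t.max' htne) (s.max' hsne) with h' | h'
          · have h3 : 2 ^ (s.max' hsne) < 2 ^ (t.max' htne + 1) := lt_of_le_of_lt hs1 ht2
            have := Nat.pow_lt_pow_iff_right (by norm_num : 1 < 2) |>.mp h3; omega
          · omega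
      have has : s.max' hsne ∈ s := s.max'_mem hsne
      have hat : s.max' hsne ∈ t := hmax ▸ t.max'_mem htne
      have hpow : 0 < 2 ^ (s.max' hsne) := by positivity
      have hss : ∑ i ∈ s.erase (s.max' hsne), 2 ^ i = N - 2 ^ (s.max' hsne) := by
        have h4 := Finset.add_sum_erase s (fun i => 2 ^ i) has
        omega
      have hts : ∑ i ∈ t.erase (s.max' hsne), 2 ^ i = N - 2 ^ (s.max' hsne) := by
        have h4 := Finset.add_sum_erase t (fun i => 2 ^ i) hat
        omega
      have hlt : N - 2 ^ (s.max' hsne) < N := by omega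
      have herase := ih (N - 2 ^ (s.max' hsne)) hlt (s.erase (s.max' hsne)) (t.erase (s.max' hsne)) hss hts
      ext i
      by_cases hia : i = s.max' hsne
      · subst hia; simp [has, hat]
      · constructor
        · intro hi
          have h5 : i ∈ s.erase (s.max' hsne) := Finset.mem_erase.mpr ⟨hia, hi⟩
          rw [herase] at h5
          exact Finset.mem_of_mem_erase h5
        · intro hi
          have h5 : i ∈ t.erase (s.max' hsne) := Finset.mem_erase.mpr ⟨hia, hi⟩
          rw [← herase] at h5
          exact Finset.mem_of_mem_erase h5

section CacheAux
open Finset Polynomial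

section CacheAux

variable {𝓕 𝓚 : Type} [Fintype 𝓕] [DecidableEq 𝓕] [Fintype 𝓚] [DecidableEq 𝓚]
variable {F : Type} [Field F]

/-- complement node set of a subfile: nodes that do NOT cache f -/
private def cset (X : 𝓚 → Finset 𝓕) (f : 𝓕) : Finset 𝓚 :=
  Finset.univ.filter (fun j => f ∉ X j)

private lemma cset_eq_iff (X : 𝓚 → Finset 𝓕)
    (hdist : ∀ f₁ f₂ : 𝓕, f₁ ≠ f₂ →
      Finset.univ.filter (fun k => f₁ ∈ X k) ≠ Finset.univ.filter (fun k => f₂ ∈ X k))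
    {f₁ f₂ : 𝓕} (h : cset X f₁ = cset X f₂) : f₁ = f₂ := by
  by_contra hne
  apply hdist f₁ f₂ hne
  ext j
  simp only [Finset.mem_filter, Finset.mem_univ, true_and]
  have := Finset.ext_iff.mp h j
  simp only [cset, Finset.mem_filter, Finset.mem_univ, true_and] at this
  tauto

private lemma not_mem_cset {X : 𝓚 → Finset 𝓕} {f : 𝓕} {k : 𝓚} (h : f ∈ X k) :
    k ∉ cset X f := by simp [cset, h]

private lemma mem_cset_self {X : 𝓚 → Finset 𝓕} {f : 𝓕} {k : 𝓚} (h : f ∉ X k) :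
    k ∈ cset X f := by simp [cset, h]

/-- The determinant polynomial for one decoding configuration. -/
private noncomputable def Dpoly (X : 𝓚 → Finset 𝓕) (m : ℕ) (k : 𝓚) {m' : ℕ}
    (hm' : m' ≤ m) (fv : Fin m' → 𝓕) : MvPolynomial (𝓚 × Fin m) F :=
  (Matrix.of fun i s : Fin m' => ∏ j ∈ cset X (fv i), ∏ s' : Fin m,
    (MvPolynomial.X ((k, Fin.castLE hm' s) : 𝓚 × Fin m) - MvPolynomial.X (j, s'))).det

private lemma Dpoly_ne_zero (X : 𝓚 → Finset 𝓕)
    (hdist : ∀ f₁ f₂ : 𝓕, f₁ ≠ f₂ →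
      Finset.univ.filter (fun k => f₁ ∈ X k) ≠ Finset.univ.filter (fun k => f₂ ∈ X k))
    (m : ℕ) (k : 𝓚) {m' : ℕ} (hm' : m' ≤ m) (fv : Fin m' → 𝓕)
    (hinj : Function.Injective fv) (hmem : ∀ i, fv i ∈ X k) :
    (Dpoly X m k hm' fv : MvPolynomial (𝓚 × Fin m) F) ≠ 0 := by
  classical
  set 𝕂 := AlgebraicClosure (RatFunc F) with h𝕂
  -- the transcendental-like element
  set φ : F[X] →+* 𝕂 :=
    (algebraMap (RatFunc F) 𝕂).comp (algebraMap F[X] (RatFunc F)) with hφ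
  have hφinj : Function.Injective φ :=
    (algebraMap (RatFunc F) 𝕂).injective.comp (RatFunc.algebraMap_injective F)
  set c : 𝕂 := φ Polynomial.X with hc
  have hcpow : ∀ i j : ℕ, c ^ i = c ^ j → i = j := by
    intro i j hij
    rw [hc, ← map_pow, ← map_pow] at hij
    have := hφinj hij
    have h1 : (Polynomial.X ^ i : F[X]).natDegree = (Polynomial.X ^ j : F[X]).natDegree := by
      rw [this]
    simpa [Polynomial.natDegree_X_pow] using h1
  -- weights
  set e𝓚 : 𝓚 ≃ Fin (Fintype.card 𝓚) := Fintype.equivFin 𝓚 with he𝓚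
  set wt : 𝓚 → ℕ := fun j => 2 ^ (e𝓚 j : ℕ) with hwt
  set W : Fin m' → ℕ := fun i => ∑ j ∈ cset X (fv i), wt j with hW
  have hWinj : Function.Injective W := by
    intro i i' hii
    have himg : ∀ i₀ : Fin m', W i₀ = ∑ b ∈ (cset X (fv i₀)).image (fun j => (e𝓚 j : ℕ)), 2 ^ b := by
      intro i₀
      rw [hW]
      rw [Finset.sum_image (f := fun b => 2 ^ b)]
      intro x _ y _ hxy
      exact e𝓚.injective (Fin.val_injective hxy)
    have h2 := two_pow_sum_inj (W i) _ _ (himg i).symm (hii ▸ (himg i').symm)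
    have h3 : cset X (fv i) = cset X (fv i') := by
      have hinj2 : Function.Injective (fun j : 𝓚 => (e𝓚 j : ℕ)) :=
        fun x y hxy => e𝓚.injective (Fin.val_injective hxy)
      exact Finset.image_injective hinj2 h2
    exact hinj (cset_eq_iff X hdist h3)
  set v : Fin m' → 𝕂 := fun i => c ^ W i with hv
  have hvinj : Function.Injective v := fun i j h => hWinj (hcpow _ _ h)
  set α : Fin m' → 𝕂 := fun s => c ^ (s : ℕ) with hα
  have hαinj : Set.InjOn α (Finset.univ : Finset (Fin m')) := by
    intro s _ t _ hst
    exact Fin.val_injective (hcpow _ _ hst)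
  -- interpolating polynomials
  set base : 𝕂[X] := (∏ s : Fin m', (Polynomial.X - Polynomial.C (α s))) * Polynomial.X ^ (m - m')
    with hbase
  have hbase_monic : base.Monic :=
    (Polynomial.monic_prod_of_monic _ _ (fun s _ => Polynomial.monic_X_sub_C _)).mul
      (Polynomial.monic_X_pow _)
  have hprod_deg : (∏ s : Fin m', (Polynomial.X - Polynomial.C (α s))).natDegree = m' := by
    rw [Polynomial.natDegree_prod _ _ (fun s _ => Polynomial.X_sub_C_ne_zero _)]
    simp [Polynomial.natDegree_X_sub_C]
  have hbase_deg : base.natDegree = m := by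
    rw [hbase, Polynomial.natDegree_mul (Polynomial.monic_prod_of_monic _ _
      (fun s _ => Polynomial.monic_X_sub_C _)).ne_zero (Polynomial.monic_X_pow _).ne_zero,
      hprod_deg, Polynomial.natDegree_X_pow]
    omega
  -- the interpolating monic polynomials
  set gK : 𝓚 → 𝕂[X] := fun j =>
    base + Lagrange.interpolate Finset.univ α (fun s => c ^ (wt j * (s : ℕ))) with hgK
  have hbase_degree : base.degree = (m : ℕ) :=
    hbase_deg ▸ Polynomial.degree_eq_natDegree hbase_monic.ne_zero
  have hinterp_deg : ∀ j : 𝓚,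
      (Lagrange.interpolate Finset.univ α (fun s => c ^ (wt j * (s : ℕ)))).degree < base.degree := by
    intro j
    refine lt_of_lt_of_le (Lagrange.degree_interpolate_lt _ hαinj) ?_
    rw [hbase_degree]
    simp only [Finset.card_univ, Fintype.card_fin]
    exact_mod_cast Nat.cast_le.mpr hm'
  have hg_monic : ∀ j, (gK j).Monic := fun j => hbase_monic.add_of_left (hinterp_deg j)
  have hg_deg : ∀ j, (gK j).natDegree = m := by
    intro j
    rw [hgK]
    simpa [hbase_deg] using Polynomial.natDegree_add_eq_left_of_degree_lt (hinterp_deg j)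
  have hg_eval : ∀ (j : 𝓚) (s : Fin m'), Polynomial.eval (α s) (gK j) = c ^ (wt j * (s : ℕ)) := by
    intro j s
    rw [hgK]
    simp only [Polynomial.eval_add]
    rw [Lagrange.eval_interpolate_at_node _ hαinj (Finset.mem_univ s)]
    have hb0 : Polynomial.eval (α s) base = 0 := by
      rw [hbase, Polynomial.eval_mul, Polynomial.eval_prod]
      rw [Finset.prod_eq_zero (Finset.mem_univ s) (by simp)]
      simp
    rw [hb0, zero_add]
  -- root lists
  have hroots_card : ∀ j, Multiset.card (gK j).roots = m := by
    intro j
    rw [Polynomial.splits_iff_card_roots.mp (IsAlgClosed.splits (gK j)), hg_deg]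
  have hlen : ∀ j, ((gK j).roots.toList).length = m := by
    intro j; rw [Multiset.length_toList, hroots_card]
  -- the witness point
  set p : 𝓚 × Fin m → 𝕂 := fun js =>
    if js.1 = k then c ^ (js.2 : ℕ)
    else ((gK js.1).roots.toList).get ⟨js.2, by rw [hlen js.1]; exact js.2.isLt⟩ with hp
  -- evaluation of the inner product over roots
  have hroot_prod : ∀ (j : 𝓚) (x : 𝕂), j ≠ k →
      ∏ s' : Fin m, (x - p (j, s')) = Polynomial.eval x (gK j) := by
    intro j x hjk
    have hfact : gK j = (Multiset.map (fun r => Polynomial.X - Polynomial.C r) (gK j).roots).prod := by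
      have h := (IsAlgClosed.splits (gK j)).eq_prod_roots
      rwa [(hg_monic j).leadingCoeff, Polynomial.C_1, one_mul] at h
    have heval : Polynomial.eval x (gK j) = ((gK j).roots.map (fun r => x - r)).prod := by
      conv_lhs => rw [hfact]
      rw [Polynomial.eval_multiset_prod, Multiset.map_map]
      congr 1
      apply Multiset.map_congr rfl
      intro r _
      simp
    rw [heval]
    have hcoe : (gK j).roots = ↑((gK j).roots.toList) := (Multiset.coe_toList _).symm
    rw [hcoe, Multiset.map_coe, Multiset.prod_coe]
    set L := (gK j).roots.toList with hL
    have hmap : L.map (fun r => x - r) = List.ofFn (fun i : Fin L.length => x - L.get i) := by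
      conv_lhs => rw [← List.ofFn_get L]
      rw [List.map_ofFn]
      rfl
    rw [hmap, List.prod_ofFn]
    refine Fintype.prod_equiv (finCongr ((hlen j).symm)) _ _ ?_
    intro s'
    show x - p (j, s') = _
    simp only [hp]
    rw [if_neg (by exact hjk : (j, s').1 ≠ k)]
    rfl
  -- now compute aeval p of the determinant
  have hdetcomp : MvPolynomial.aeval p (Dpoly X m k hm' fv : MvPolynomial (𝓚 × Fin m) F)
      = (Matrix.vandermonde v).det := by
    rw [Dpoly]
    rw [show (MvPolynomial.aeval p (Matrix.of fun i s : Fin m' => ∏ j ∈ cset X (fv i), ∏ s' : Fin m,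
      (MvPolynomial.X ((k, Fin.castLE hm' s) : 𝓚 × Fin m) - MvPolynomial.X (j, s'))).det)
      = ((MvPolynomial.aeval p).toRingHom.mapMatrix
          (Matrix.of fun i s : Fin m' => ∏ j ∈ cset X (fv i), ∏ s' : Fin m,
            (MvPolynomial.X ((k, Fin.castLE hm' s) : 𝓚 × Fin m) - MvPolynomial.X (j, s')))).det
      from RingHom.map_det _ _]
    congr 1
    ext i s
    show MvPolynomial.aeval p _ = _
    simp only [Matrix.map_apply, Matrix.of_apply, AlgHom.toRingHom_eq_coe, RingHom.coe_coe,
      map_prod, map_sub, MvPolynomial.aeval_X, Matrix.vandermonde]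
    have hentry : ∀ j ∈ cset X (fv i),
        ∏ s' : Fin m, (p (k, Fin.castLE hm' s) - p (j, s')) = c ^ (wt j * (s : ℕ)) := by
      intro j hj
      have hjk : j ≠ k := fun h => (not_mem_cset (hmem i)) (h ▸ hj)
      have hpk : p (k, Fin.castLE hm' s) = α s := by
        simp only [hp, if_pos rfl]
        rfl
      rw [hpk, hroot_prod j (α s) hjk, hg_eval]
    rw [Finset.prod_congr rfl hentry, Finset.prod_pow_eq_pow_sum, ← Finset.sum_mul, pow_mul]
  have hvdm : (Matrix.vandermonde v).det ≠ 0 := by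
    rw [Matrix.det_vandermonde]
    rw [Finset.prod_ne_zero_iff]
    intro i _
    rw [Finset.prod_ne_zero_iff]
    intro j hj
    have : i ≠ j := (Finset.mem_Ioi.mp hj).ne
    exact sub_ne_zero.mpr (fun h => this (hvinj h.symm))
  intro h0
  rw [h0, map_zero] at hdetcomp
  exact hvdm hdetcomp.symm

private lemma cset_card (X : 𝓚 → Finset 𝓕) (r : ℕ)
    (hreg : ∀ f : 𝓕, (Finset.univ.filter (fun k => f ∈ X k)).card = r) (f : 𝓕) :
    (cset X f).card = Fintype.card 𝓚 - r := by
  rw [cset]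
  rw [Finset.filter_not, Finset.card_sdiff_of_subset (Finset.filter_subset _ _), hreg f]
  simp [Finset.card_univ]

private lemma eval_Dpoly (X : 𝓚 → Finset 𝓕) (m : ℕ) (k : 𝓚) {m' : ℕ} (hm' : m' ≤ m)
    (fv : Fin m' → 𝓕) (a : 𝓚 × Fin m → F) :
    MvPolynomial.eval a (Dpoly X m k hm' fv : MvPolynomial (𝓚 × Fin m) F)
      = (Matrix.of fun i s : Fin m' => ∏ j ∈ cset X (fv i), ∏ s' : Fin m,
          (a (k, Fin.castLE hm' s) - a (j, s'))).det := by
  rw [Dpoly]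
  rw [RingHom.map_det (MvPolynomial.eval a)]
  congr 1
  ext i s
  simp only [RingHom.mapMatrix_apply, Matrix.map_apply, Matrix.of_apply, map_prod, map_sub,
    MvPolynomial.eval_X]

private lemma Dpoly_isHomogeneous (X : 𝓚 → Finset 𝓕) (m r : ℕ)
    (hreg : ∀ f : 𝓕, (Finset.univ.filter (fun k => f ∈ X k)).card = r)
    (k : 𝓚) {m' : ℕ} (hm' : m' ≤ m) (fv : Fin m' → 𝓕) :
    (Dpoly X m k hm' fv : MvPolynomial (𝓚 × Fin m) F).IsHomogeneous
      (m' * ((Fintype.card 𝓚 - r) * m)) := by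
  rw [Dpoly, Matrix.det_apply]
  apply MvPolynomial.IsHomogeneous.sum
  intro σ _
  have hentry : ∀ i₀ s₀ : Fin m',
      ((Matrix.of fun i s : Fin m' => ∏ j ∈ cset X (fv i), ∏ s' : Fin m,
        (MvPolynomial.X ((k, Fin.castLE hm' s) : 𝓚 × Fin m) - MvPolynomial.X (j, s')))
          i₀ s₀ : MvPolynomial (𝓚 × Fin m) F).IsHomogeneous ((Fintype.card 𝓚 - r) * m) := by
    intro i₀ s₀
    have h1 : ∀ j ∈ cset X (fv i₀), (∏ s' : Fin m,
        (MvPolynomial.X ((k, Fin.castLE hm' s₀) : 𝓚 × Fin m) - MvPolynomial.X (j, s')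
          : MvPolynomial (𝓚 × Fin m) F)).IsHomogeneous m := by
      intro j _
      have h2 := MvPolynomial.IsHomogeneous.prod Finset.univ
        (fun s' : Fin m => (MvPolynomial.X ((k, Fin.castLE hm' s₀) : 𝓚 × Fin m)
          - MvPolynomial.X (j, s') : MvPolynomial (𝓚 × Fin m) F)) (fun _ => 1)
        (fun s' _ => (MvPolynomial.isHomogeneous_X _ _).sub (MvPolynomial.isHomogeneous_X _ _))
      simpa using h2
    have h3 := MvPolynomial.IsHomogeneous.prod (cset X (fv i₀)) _ (fun _ => m) h1
    rw [Finset.sum_const, smul_eq_mul, cset_card X r hreg] at h3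
    exact h3
  have hprod := MvPolynomial.IsHomogeneous.prod Finset.univ _
    (fun _ => (Fintype.card 𝓚 - r) * m) (fun i _ => hentry (σ i) i)
  rw [Finset.sum_const, smul_eq_mul, Finset.card_univ, Fintype.card_fin] at hprod
  have hsmul : ∀ (u : ℤˣ) (q : MvPolynomial (𝓚 × Fin m) F) (n : ℕ),
      q.IsHomogeneous n → (u • q).IsHomogeneous n := by
    intro u q n hq
    obtain h | h := Int.units_eq_one_or u
    · rw [h, one_smul]; exact hq
    · rw [h]
      have h2 : ((-1 : ℤˣ) • q) = -q := by simp
      rw [h2]; exact hq.neg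
  exact hsmul _ _ _ hprod

/-- the good-evaluation-point property -/
private def GoodA (X : 𝓚 → Finset 𝓕) (m : ℕ) (a : 𝓚 × Fin m → F) : Prop :=
  ∀ (k : 𝓚) (m' : ℕ) (hm' : m' ≤ m) (fv : Fin m' → 𝓕), Function.Injective fv →
    (∀ i, fv i ∈ X k) →
    (Matrix.of fun i s : Fin m' => ∏ j ∈ cset X (fv i), ∏ s' : Fin m,
      (a (k, Fin.castLE hm' s) - a (j, s'))).det ≠ 0

private lemma exists_goodA [Fintype F] (X : 𝓚 → Finset 𝓕) (m r : ℕ)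
    (hreg : ∀ f : 𝓕, (Finset.univ.filter (fun k => f ∈ X k)).card = r)
    (hdist : ∀ f₁ f₂ : 𝓕, f₁ ≠ f₂ →
      Finset.univ.filter (fun k => f₁ ∈ X k) ≠ Finset.univ.filter (fun k => f₂ ∈ X k))
    (hbig : Fintype.card (𝓚 × Σ m' : Fin (m+1), (Fin m'.val → 𝓕)) *
      (m * (Fintype.card 𝓚 * m)) < Fintype.card F) :
    ∃ a : 𝓚 × Fin m → F, GoodA X m a := by
  classical
  set Idx := 𝓚 × Σ m' : Fin (m+1), (Fin m'.val → 𝓕) with hIdx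
  set cond : Idx → Prop := fun idx =>
    Function.Injective idx.2.2 ∧ ∀ i, idx.2.2 i ∈ X idx.1 with hcond
  set P : MvPolynomial (𝓚 × Fin m) F := ∏ idx : Idx,
    if cond idx then Dpoly X m idx.1 (Nat.le_of_lt_succ idx.2.1.isLt) idx.2.2 else 1 with hP
  set N : ℕ := ∑ idx : Idx,
    if cond idx then idx.2.1.val * ((Fintype.card 𝓚 - r) * m) else 0 with hN
  have hPhom : P.IsHomogeneous N := by
    apply MvPolynomial.IsHomogeneous.prod
    intro idx _
    by_cases h : cond idx
    · rw [if_pos h, if_pos h]; exact Dpoly_isHomogeneous X m r hreg _ _ _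
    · rw [if_neg h, if_neg h]; exact MvPolynomial.isHomogeneous_one _ _
  have hPne : P ≠ 0 := by
    rw [hP, Finset.prod_ne_zero_iff]
    intro idx _
    by_cases h : cond idx
    · rw [if_pos h]; exact Dpoly_ne_zero X hdist m idx.1 _ idx.2.2 h.1 h.2
    · rw [if_neg h]; exact one_ne_zero
  have hNle : N ≤ Fintype.card Idx * (m * (Fintype.card 𝓚 * m)) := by
    rw [hN]
    calc ∑ idx : Idx, (if cond idx then idx.2.1.val * ((Fintype.card 𝓚 - r) * m) else 0)
        ≤ ∑ _idx : Idx, m * (Fintype.card 𝓚 * m) := by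
          apply Finset.sum_le_sum
          intro idx _
          by_cases h : cond idx
          · rw [if_pos h]
            exact Nat.mul_le_mul (Nat.le_of_lt_succ idx.2.1.isLt)
              (Nat.mul_le_mul_right _ (Nat.sub_le _ _))
          · rw [if_neg h]; exact Nat.zero_le _
      _ = Fintype.card Idx * (m * (Fintype.card 𝓚 * m)) := by
          rw [Finset.sum_const, smul_eq_mul, Finset.card_univ]
  have hexists : ∃ a : 𝓚 × Fin m → F, MvPolynomial.eval a P ≠ 0 := by
    by_contra hcon
    push_neg at hcon
    apply hPne
    apply hPhom.eq_zero_of_forall_eval_eq_zero_of_le_card hcon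
    rw [Cardinal.mk_fintype]
    exact_mod_cast Nat.cast_le.mpr (le_of_lt (lt_of_le_of_lt hNle hbig))
  obtain ⟨a, ha⟩ := hexists
  refine ⟨a, ?_⟩
  intro k m' hm' fv hinjv hmemv
  set idx : Idx := (k, ⟨⟨m', Nat.lt_succ_of_le hm'⟩, fv⟩) with hidx
  have hterm : MvPolynomial.eval a
      (if cond idx then Dpoly X m idx.1 (Nat.le_of_lt_succ idx.2.1.isLt) idx.2.2 else 1) ≠ 0 := by
    intro h0
    apply ha
    rw [hP, map_prod]
    exact Finset.prod_eq_zero (Finset.mem_univ idx) h0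
  rw [if_pos (show cond idx from ⟨hinjv, hmemv⟩)] at hterm
  rw [eval_Dpoly] at hterm
  exact hterm

end CacheAux

section CacheAux2
variable {𝓕 𝓚 : Type} [Fintype 𝓕] [DecidableEq 𝓕] [Fintype 𝓚] [DecidableEq 𝓚]
variable {F : Type} [Field F]
open Finset Polynomial

private noncomputable def gpoly (m : ℕ) {F : Type} [Field F] (a : 𝓚 × Fin m → F) (j : 𝓚) : F[X] :=
  ∏ s' : Fin m, (Polynomial.X - Polynomial.C (a (j, s')))

private noncomputable def Gpoly (X : 𝓚 → Finset 𝓕) (m : ℕ) {F : Type} [Field F]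
    (a : 𝓚 × Fin m → F) (f : 𝓕) : F[X] :=
  ∏ j ∈ cset X f, gpoly m a j

private lemma natDegree_Gpoly_le (X : 𝓚 → Finset 𝓕) (m : ℕ) (a : 𝓚 × Fin m → F) (f : 𝓕) :
    (Gpoly X m a f).natDegree ≤ (cset X f).card * m := by
  refine le_trans (Polynomial.natDegree_prod_le _ _) ?_
  have h1 : ∀ j ∈ cset X f, (gpoly m a j).natDegree ≤ m := by
    intro j _
    refine le_trans (Polynomial.natDegree_prod_le _ _) ?_
    have h2 : ∀ s' ∈ (Finset.univ : Finset (Fin m)),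
        (Polynomial.X - Polynomial.C (a (j, s'))).natDegree ≤ 1 :=
      fun s' _ => Polynomial.natDegree_X_sub_C_le _
    refine le_trans (Finset.sum_le_sum h2) ?_
    simp
  refine le_trans (Finset.sum_le_sum h1) ?_
  rw [Finset.sum_const, smul_eq_mul]

private lemma eval_Gpoly (X : 𝓚 → Finset 𝓕) (m : ℕ) (a : 𝓚 × Fin m → F) (f : 𝓕) (x : F) :
    Polynomial.eval x (Gpoly X m a f) = ∏ j ∈ cset X f, ∏ s' : Fin m, (x - a (j, s')) := by
  rw [Gpoly, Polynomial.eval_prod]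
  apply Finset.prod_congr rfl
  intro j _
  rw [gpoly, Polynomial.eval_prod]
  simp

private lemma eval_Gpoly_zero (X : 𝓚 → Finset 𝓕) (m : ℕ) (a : 𝓚 × Fin m → F) {f : 𝓕} {k : 𝓚}
    (hf : f ∉ X k) (t : Fin m) : Polynomial.eval (a (k, t)) (Gpoly X m a f) = 0 := by
  rw [eval_Gpoly]
  apply Finset.prod_eq_zero (mem_cset_self hf)
  apply Finset.prod_eq_zero (Finset.mem_univ t)
  simp

private lemma validity [Fintype F] (X : 𝓚 → Finset 𝓕) (ε r : ℕ)
    (hreg : ∀ f : 𝓕, (Finset.univ.filter (fun k => f ∈ X k)).card = r)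
    (a : 𝓚 × Fin (2*ε) → F) (hG : GoodA X (2*ε) a) :
    ValidEncoder F X ε (Matrix.of fun (s : Fin (2*ε*(Fintype.card 𝓚 - r)+1)) (f : 𝓕) =>
      (Gpoly X (2*ε) a f).coeff s) := by
  classical
  intro k
  set l := 2*ε*(Fintype.card 𝓚 - r)+1 with hl
  set H : Matrix (Fin l) 𝓕 F :=
    Matrix.of fun (s : Fin l) (f : 𝓕) => (Gpoly X (2*ε) a f).coeff s with hH
  -- ncard to Finset card
  have hncard : ∀ e : 𝓕 → F, {f | e f ≠ 0}.ncard = (Finset.univ.filter (fun f => e f ≠ 0)).card := by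
    intro e
    rw [Set.ncard_eq_toFinset_card', Set.toFinset_setOf]
  -- the uniqueness core
  have key : ∀ z z' e e' : 𝓕 → F, H.mulVec z = H.mulVec z' →
      {f | e f ≠ 0}.ncard ≤ ε → {f | e' f ≠ 0}.ncard ≤ ε →
      (∀ f, f ∈ X k → z f - e f = z' f - e' f) → ∀ f, f ∈ X k → z f = z' f := by
    intro z z' e e' hHz hwe hwe' hagree
    set u : 𝓕 → F := fun f => z f - z' f with hu
    have hPzero : (∑ f : 𝓕, Polynomial.C (u f) * Gpoly X (2*ε) a f) = 0 := by
      apply Polynomial.ext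
      intro d
      rw [Polynomial.finset_sum_coeff]
      simp only [Polynomial.coeff_C_mul, Polynomial.coeff_zero]
      by_cases hd : d < l
      · have h1 : H.mulVec u ⟨d, hd⟩ = 0 := by
          have hzz : u = z - z' := rfl
          have h2 : H.mulVec u = H.mulVec z - H.mulVec z' := by
            rw [hzz, Matrix.mulVec_sub]
          rw [h2, hHz]
          simp
        rw [← h1]
        rw [Matrix.mulVec]
        simp only [dotProduct, hH, Matrix.of_apply]
        apply Finset.sum_congr rfl
        intro f _
        ring
      · apply Finset.sum_eq_zero
        intro f _
        have h3 : (Gpoly X (2*ε) a f).natDegree < d := by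
          have h4 := natDegree_Gpoly_le X (2*ε) a f
          rw [cset_card X r hreg f] at h4
          have h5 : (Fintype.card 𝓚 - r) * (2*ε) = 2*ε*(Fintype.card 𝓚 - r) := by ring
          omega
        rw [Polynomial.coeff_eq_zero_of_natDegree_lt h3, mul_zero]
    set T := (X k).filter (fun f => u f ≠ 0) with hT
    have hTcard : T.card ≤ 2*ε := by
      have hsub : T ⊆ (Finset.univ.filter (fun f => e f ≠ 0)) ∪
          (Finset.univ.filter (fun f => e' f ≠ 0)) := by
        intro f hf
        obtain ⟨hfX, hfu⟩ := Finset.mem_filter.mp hf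
        have h6 := hagree f hfX
        rw [Finset.mem_union, Finset.mem_filter, Finset.mem_filter]
        by_contra hcon
        push_neg at hcon
        have he : e f = 0 := hcon.1 (Finset.mem_univ f)
        have he' : e' f = 0 := hcon.2 (Finset.mem_univ f)
        rw [he, he', sub_zero, sub_zero] at h6
        exact hfu (by rw [hu]; simp [h6])
      calc T.card ≤ _ := Finset.card_le_card hsub
        _ ≤ _ + _ := Finset.card_union_le _ _
        _ ≤ ε + ε := Nat.add_le_add (by rw [← hncard e]; exact hwe) (by rw [← hncard e']; exact hwe')
        _ = 2*ε := by ring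
    set fv : Fin T.card → 𝓕 := fun i => (T.equivFin.symm i).1 with hfv
    have hfvT : ∀ i, fv i ∈ T := fun i => (T.equivFin.symm i).2
    have hfvinj : Function.Injective fv :=
      fun i j h => T.equivFin.symm.injective (Subtype.val_injective h)
    have hfvmem : ∀ i, fv i ∈ X k := fun i => Finset.mem_of_mem_filter _ (hfvT i)
    have hfvu : ∀ i, u (fv i) ≠ 0 := fun i => (Finset.mem_filter.mp (hfvT i)).2
    set M := Matrix.of fun i s : Fin T.card => ∏ j ∈ cset X (fv i), ∏ s' : Fin (2*ε),
      (a (k, Fin.castLE hTcard s) - a (j, s')) with hM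
    have hdet : M.det ≠ 0 := hG k T.card hTcard fv hfvinj hfvmem
    have hvec : ∀ s : Fin T.card, ∑ i : Fin T.card, M i s * u (fv i) = 0 := by
      intro s
      set x := a (k, Fin.castLE hTcard s) with hx
      have h7 : Polynomial.eval x (∑ f : 𝓕, Polynomial.C (u f) * Gpoly X (2*ε) a f) = 0 := by
        rw [hPzero, Polynomial.eval_zero]
      rw [Polynomial.eval_finset_sum] at h7
      simp only [Polynomial.eval_mul, Polynomial.eval_C] at h7
      rw [← Finset.sum_filter_add_sum_filter_not Finset.univ (fun f => f ∈ X k)] at h7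
      have h8 : ∑ f ∈ Finset.univ.filter (fun f => f ∉ X k),
          u f * Polynomial.eval x (Gpoly X (2*ε) a f) = 0 := by
        apply Finset.sum_eq_zero
        intro f hf
        rw [hx, eval_Gpoly_zero X (2*ε) a (Finset.mem_filter.mp hf).2, mul_zero]
      rw [h8, add_zero] at h7
      have h9 : Finset.univ.filter (fun f => f ∈ X k) = X k := by
        ext f; simp
      rw [h9] at h7
      have h10 : ∑ f ∈ X k, u f * Polynomial.eval x (Gpoly X (2*ε) a f)
          = ∑ f ∈ T, u f * Polynomial.eval x (Gpoly X (2*ε) a f) := by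
        symm
        apply Finset.sum_subset (Finset.filter_subset _ _)
        intro f hfX hfT
        have : u f = 0 := by
          by_contra h
          exact hfT (Finset.mem_filter.mpr ⟨hfX, h⟩)
        rw [this, zero_mul]
      rw [h10] at h7
      have h12 : ∑ i : Fin T.card, M i s * u (fv i)
          = ∑ ft : {f // f ∈ T}, u ft.1 * Polynomial.eval x (Gpoly X (2*ε) a ft.1) := by
        refine Fintype.sum_equiv T.equivFin.symm _ _ ?_
        intro i
        rw [hM, Matrix.of_apply, ← eval_Gpoly X (2*ε) a (fv i) x]
        have : ((T.equivFin.symm i : {f // f ∈ T}) : 𝓕) = fv i := rfl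
        rw [this]
        ring
      rw [h12, Finset.sum_coe_sort T (fun f => u f * Polynomial.eval x (Gpoly X (2*ε) a f)), h7]
    have huv : (fun i => u (fv i)) = 0 := by
      apply Matrix.eq_zero_of_mulVec_eq_zero (M := M.transpose)
      · rw [Matrix.det_transpose]; exact hdet
      · funext s
        rw [Matrix.mulVec]
        simp only [dotProduct, Matrix.transpose_apply]
        exact hvec s
    intro f hfX
    by_contra hne
    have hfT : f ∈ T := Finset.mem_filter.mpr ⟨hfX, fun h => hne (by
      have : z f - z' f = 0 := h
      have := sub_eq_zero.mp this
      exact this)⟩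
    have h11 := congrFun huv (T.equivFin ⟨f, hfT⟩)
    simp only [hfv, Equiv.symm_apply_apply, Pi.zero_apply] at h11
    exact (hfvu (T.equivFin ⟨f, hfT⟩)) (by
      simp only [hfv, Equiv.symm_apply_apply]
      exact h11)
  -- the decoder
  refine ⟨fun sv xv => if h : ∃ z : 𝓕 → F, H.mulVec z = sv ∧ ∃ e : 𝓕 → F,
      {f | e f ≠ 0}.ncard ≤ ε ∧ ∀ g : {f // f ∈ X k}, z g.1 - e g.1 = xv g
    then fun g => h.choose g.1 else fun _ => 0, ?_⟩
  intro w e hwt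
  have hex : ∃ z : 𝓕 → F, H.mulVec z = H.mulVec (w + e) ∧ ∃ e₀ : 𝓕 → F,
      {f | e₀ f ≠ 0}.ncard ≤ ε ∧ ∀ g : {f // f ∈ X k}, z g.1 - e₀ g.1 = w g.1 :=
    ⟨w + e, rfl, e, hwt, fun g => by simp⟩
  simp only [dif_pos hex]
  funext g
  obtain ⟨h1, e', hwt', h2⟩ := hex.choose_spec
  exact key hex.choose (w + e) e' e h1 hwt' hwt
    (fun f hf => by
      have := h2 ⟨f, hf⟩
      simp only [this]
      simp) g.1 g.2

end CacheAux2

/-- Suppose `ε ≥ 1`, every subfile is cached at exactly `r` nodes with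
`1 ≤ r < K`, and distinct subfiles are cached at distinct sets of nodes. Then there is a
`B₀` such that for every `B ≥ B₀` there is a valid encoder over the field with `2^B`
elements having exactly `2ε(K − r) + 1` rows. -/
theorem exists_encoder_two_eps_K_minus_r {𝓕 𝓚 : Type} [Fintype 𝓕] [DecidableEq 𝓕]
    [Fintype 𝓚] [DecidableEq 𝓚] (X : 𝓚 → Finset 𝓕) (ε : ℕ) (hε : 1 ≤ ε) (r : ℕ)
    (hr1 : 1 ≤ r) (hrK : r < Fintype.card 𝓚)
    (hreg : ∀ f : 𝓕, (Finset.univ.filter (fun k => f ∈ X k)).card = r)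
    (hdist : ∀ f₁ f₂ : 𝓕, f₁ ≠ f₂ →
      Finset.univ.filter (fun k => f₁ ∈ X k) ≠ Finset.univ.filter (fun k => f₂ ∈ X k)) :
    ∃ B₀ : ℕ, ∀ B : ℕ, B₀ ≤ B →
      ∃ H : Matrix (Fin (2 * ε * (Fintype.card 𝓚 - r) + 1)) 𝓕 (GaloisField 2 B),
        @ValidEncoder 𝓕 𝓚 _ (GaloisField 2 B) _ (Fintype.ofFinite _) X ε _ H := by
  classical
  set NB := Fintype.card (𝓚 × Σ m' : Fin (2*ε+1), (Fin m'.val → 𝓕)) *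
    ((2*ε) * (Fintype.card 𝓚 * (2*ε))) with hNB
  refine ⟨NB + 1, ?_⟩
  intro B hB
  haveI : Fact (Nat.Prime 2) := ⟨Nat.prime_two⟩
  letI instF : Fintype (GaloisField 2 B) := Fintype.ofFinite _
  have hcard : Fintype.card (GaloisField 2 B) = 2 ^ B := by
    rw [← Nat.card_eq_fintype_card, GaloisField.card 2 B (by omega)]
  have hbig : NB < Fintype.card (GaloisField 2 B) := by
    rw [hcard]
    have h1 : NB < 2 ^ NB := Nat.lt_two_pow_self
    have h2 : 2 ^ NB ≤ 2 ^ B := Nat.pow_le_pow_right (by norm_num) (by omega)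
    omega
  obtain ⟨a, ha⟩ := exists_goodA X (2*ε) r hreg hdist hbig
  exact ⟨_, validity X ε r hreg a ha⟩
end CacheAux
end

section
/- Let F_q be a finite field, let l ≥ 2 and ε ≥ 1 be integers with 2ε ≤ l, and let U ⊆ F_q^l be a subspace of dimension 2ε. For a tuple a = (a_1, …, a_{2ε}) ∈ F_q^{2ε}, let V(a) = {(p_0, …, p_{l−1}) ∈ F_q^l : Σ_{i=0}^{l−1} p_i a_j^i = 0 for all j ∈ {1, …, 2ε}} (the coefficient vectors of polynomials of degree less than l vanishing at each a_j). Then the number of tuples a ∈ F_q^{2ε} for which U ∩ V(a) ≠ {0} is at most ((q^{2ε} − 1)/(q − 1)) · (l − 1)^{2ε}. -/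
open Matrix Finset

lemma proj_card_mul (F V : Type*) [Field F] [Fintype F] [AddCommGroup V] [Module F V]
    [Fintype V] :
    Nat.card (Projectivization F V) * (Fintype.card F - 1) = Fintype.card V - 1 := by
  classical
  have key : ∀ x : Projectivization F V,
      Function.Bijective (fun c : Fˣ =>
        (⟨⟨(c : F) • x.rep, smul_ne_zero c.ne_zero x.rep_nonzero⟩, by
          refine ((Projectivization.mk_eq_mk_iff F _ _
            (smul_ne_zero c.ne_zero x.rep_nonzero) x.rep_nonzero).2
            ⟨c, (Units.smul_def c x.rep).symm⟩).trans x.mk_rep⟩ :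
          {v : {v : V // v ≠ 0} // Projectivization.mk F v.1 v.2 = x})) := by
    intro x
    constructor
    · intro c c' h
      have : (c : F) • x.rep = (c' : F) • x.rep := by
        have := congrArg (fun y => (y.1.1 : V)) h
        simpa using this
      exact Units.ext (smul_left_injective F x.rep_nonzero this)
    · rintro ⟨⟨v, hv⟩, h⟩
      obtain ⟨a, ha⟩ := (Projectivization.mk_eq_mk_iff F v x.rep hv x.rep_nonzero).1
        (h.trans x.mk_rep.symm)
      refine ⟨a, ?_⟩
      apply Subtype.ext; apply Subtype.ext
      simpa [Units.smul_def] using ha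
  have e : {v : V // v ≠ 0} ≃ (Projectivization F V) × Fˣ :=
    ((Equiv.sigmaFiberEquiv (fun v : {v : V // v ≠ 0} =>
        Projectivization.mk F v.1 v.2)).symm.trans
      (Equiv.sigmaCongrRight fun x => (Equiv.ofBijective _ (key x)).symm)).trans
      (Equiv.sigmaEquivProd _ _)
  have h1 : Nat.card {v : V // v ≠ 0} = Fintype.card V - 1 := by
    rw [Nat.card_eq_fintype_card]
    simpa using Fintype.card_subtype_compl (fun v : V => v = 0)
  have h2 := Nat.card_congr e
  rw [h1, Nat.card_prod, Nat.card_eq_fintype_card (α := Fˣ), Fintype.card_units] at h2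
  exact h2.symm

/-- Let `U ⊆ F_q^l` be a subspace of dimension `2ε` and, for a tuple
`a ∈ F_q^{2ε}`, let `V(a)` be the space of coefficient vectors of polynomials of degree
`< l` vanishing at each `a_j`. The number of tuples `a` with `U ∩ V(a) ≠ {0}` is at most
`((q^{2ε} − 1)/(q − 1)) · (l − 1)^{2ε}`. -/
theorem random_vandermonde_bound (F : Type) [Field F] [Fintype F] (l ε : ℕ)
    (hl : 2 ≤ l) (hε : 1 ≤ ε) (hεl : 2 * ε ≤ l)
    (U : Submodule F (Fin l → F)) (hU : Module.finrank F U = 2 * ε) :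
    {a : Fin (2 * ε) → F | ∃ p : Fin l → F, p ∈ U ∧
        (∀ j : Fin (2 * ε), ∑ i : Fin l, p i * (a j) ^ (i : ℕ) = 0) ∧ p ≠ 0}.ncard ≤
      (Fintype.card F ^ (2 * ε) - 1) / (Fintype.card F - 1) * (l - 1) ^ (2 * ε) := by
  classical
  haveI : Finite (Projectivization F U) := Quotient.finite _
  haveI : Fintype (Projectivization F U) := Fintype.ofFinite _
  set q := Fintype.card F with hq
  -- the polynomial attached to a coefficient vector
  set poly : (Fin l → F) → Polynomial F :=
    fun v => ∑ i : Fin l, Polynomial.C (v i) * Polynomial.X ^ (i : ℕ) with hpoly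
  have heval : ∀ (v : Fin l → F) (a : F),
      (poly v).eval a = ∑ i : Fin l, v i * a ^ (i : ℕ) := by
    intro v a; simp [hpoly, Polynomial.eval_finset_sum]
  have hcoeff : ∀ (v : Fin l → F) (i : Fin l), (poly v).coeff (i : ℕ) = v i := by
    intro v i
    rw [hpoly, Polynomial.finset_sum_coeff]
    rw [Finset.sum_eq_single i]
    · simp
    · intro b _ hb
      have hbi : (i : ℕ) ≠ (b : ℕ) := fun h => hb (Fin.ext h.symm)
      simp [Polynomial.coeff_X_pow, hbi]
    · simp
  have hne : ∀ v : Fin l → F, v ≠ 0 → poly v ≠ 0 := by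
    intro v hv h
    apply hv
    funext i
    have := hcoeff v i
    rw [h] at this
    simpa using this.symm
  have hdeg : ∀ v : Fin l → F, (poly v).natDegree ≤ l - 1 := by
    intro v
    apply Polynomial.natDegree_sum_le_of_forall_le
    intro i _
    refine le_trans (Polynomial.natDegree_C_mul_le _ _) ?_
    simpa using Nat.le_sub_one_of_lt i.2
  -- root finsets
  set R : Projectivization F U → Finset F := fun x => (poly (x.rep : Fin l → F)).roots.toFinset
    with hR
  have hRcard : ∀ x, (R x).card ≤ l - 1 := by
    intro x
    refine le_trans (Multiset.toFinset_card_le _) (le_trans (Polynomial.card_roots' _) ?_)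
    exact hdeg _
  -- the bad set
  set S := {a : Fin (2 * ε) → F | ∃ p : Fin l → F, p ∈ U ∧
      (∀ j : Fin (2 * ε), ∑ i : Fin l, p i * (a j) ^ (i : ℕ) = 0) ∧ p ≠ 0} with hS
  have hsub : S.toFinset ⊆ Finset.univ.biUnion
      (fun x : Projectivization F U => Fintype.piFinset fun _ : Fin (2 * ε) => R x) := by
    intro a ha
    rw [Set.mem_toFinset] at ha
    obtain ⟨p, hpU, hroots, hp0⟩ := ha
    have hpU0 : (⟨p, hpU⟩ : U) ≠ 0 := by simpa [Subtype.ext_iff] using hp0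
    set x := Projectivization.mk F (⟨p, hpU⟩ : U) hpU0 with hx
    obtain ⟨c, hc⟩ := Projectivization.exists_smul_eq_mk_rep F (⟨p, hpU⟩ : U) hpU0
    simp only [Finset.mem_biUnion, Finset.mem_univ, true_and]
    refine ⟨x, ?_⟩
    rw [Fintype.mem_piFinset]
    intro j
    have hrep : (x.rep : Fin l → F) = (c : F) • p := by
      rw [← hc]; rfl
    have hev : (poly (x.rep : Fin l → F)).eval (a j) = 0 := by
      rw [heval, hrep]
      simp only [Pi.smul_apply, smul_eq_mul, mul_assoc, ← Finset.mul_sum]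
      rw [hroots j, mul_zero]
    rw [hR]
    simp only [Multiset.mem_toFinset]
    rw [Polynomial.mem_roots (hne _ (by
      simp only [ne_eq, Submodule.coe_eq_zero]
      exact x.rep_nonzero))]
    exact hev
  -- counting
  have hcount : S.ncard ≤ Nat.card (Projectivization F U) * (l - 1) ^ (2 * ε) := by
    rw [Set.ncard_eq_toFinset_card']
    refine le_trans (Finset.card_le_card hsub) ?_
    refine le_trans (Finset.card_biUnion_le) ?_
    have hb : ∀ x ∈ (Finset.univ : Finset (Projectivization F U)),
        (Fintype.piFinset fun _ : Fin (2 * ε) => R x).card ≤ (l - 1) ^ (2 * ε) := by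
      intro x _
      rw [Fintype.card_piFinset]
      calc ∏ _j : Fin (2 * ε), (R x).card ≤ ∏ _j : Fin (2 * ε), (l - 1) :=
          Finset.prod_le_prod (fun _ _ => Nat.zero_le _) (fun _ _ => hRcard x)
        _ = (l - 1) ^ (2 * ε) := by simp
    refine le_trans (Finset.sum_le_card_nsmul Finset.univ _ _ hb) ?_
    rw [smul_eq_mul, Finset.card_univ, Nat.card_eq_fintype_card]
  refine le_trans hcount ?_
  apply Nat.mul_le_mul_right
  -- Nat.card ℙ = (q^(2ε)-1)/(q-1)
  have hq2 : 2 ≤ q := Fintype.one_lt_card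
  have hUcard : Fintype.card U = q ^ (2 * ε) := by
    rw [Module.card_eq_pow_finrank (K := F) (V := U), hU]
  have := proj_card_mul F U
  rw [hUcard] at this
  rw [← hq] at this
  rw [← this, Nat.mul_div_cancel _ (by omega : 0 < q - 1)]
end

section
/- Assume ε ≥ 1, 𝓚 is nonempty, |X_k| = Z for every k ∈ 𝓚, and every subfile index f ∈ 𝓕 belongs to X_k for at least one k ∈ 𝓚. Then ℓ*(X,ε) = F if and only if Z ≤ 2ε. -/
open Matrix Finset

/-- If decoding is information-theoretically possible (uniqueness), a decoder exists. -/
lemma validEncoder_of_unique {𝓕 𝓚 : Type} [Fintype 𝓕] {F : Type} [Field F] [Fintype F]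
    (X : 𝓚 → Finset 𝓕) (ε : ℕ) {l : ℕ} (H : Matrix (Fin l) 𝓕 F)
    (huniq : ∀ k (w e w' e' : 𝓕 → F), {f | e f ≠ 0}.ncard ≤ ε → {f | e' f ≠ 0}.ncard ≤ ε →
      H.mulVec (w + e) = H.mulVec (w' + e') → (∀ f ∈ X k, w f = w' f) →
      ∀ f ∈ X k, (w + e) f = (w' + e') f) :
    ValidEncoder F X ε H := by
  classical
  intro k
  refine ⟨fun c s =>
    if h : ∃ p : (𝓕 → F) × (𝓕 → F), {f | p.2 f ≠ 0}.ncard ≤ ε ∧ H.mulVec (p.1 + p.2) = c ∧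
        (fun f : {f // f ∈ X k} => p.1 f.1) = s
      then fun f => (h.choose.1 + h.choose.2) f.1 else fun _ => 0, ?_⟩
  intro w e hwt
  have hex : ∃ p : (𝓕 → F) × (𝓕 → F), {f | p.2 f ≠ 0}.ncard ≤ ε ∧
      H.mulVec (p.1 + p.2) = H.mulVec (w + e) ∧
      (fun f : {f // f ∈ X k} => p.1 f.1) = fun f : {f // f ∈ X k} => w f.1 :=
    ⟨(w, e), hwt, rfl, rfl⟩
  simp only [dif_pos hex]
  funext f
  obtain ⟨h1, h2, h3⟩ := hex.choose_spec
  exact huniq k _ _ w e h1 hwt h2 (fun g hg => congrFun h3 ⟨g, hg⟩) f.1 f.2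

/-- The identity encoder with `l = |𝓕|` is always valid. -/
lemma mem_upper {𝓕 𝓚 : Type} [Fintype 𝓕] (X : 𝓚 → Finset 𝓕) (ε : ℕ) :
    ∃ (F : Type) (inst1 : Field F) (inst2 : Fintype F)
      (H : Matrix (Fin (Fintype.card 𝓕)) 𝓕 F),
      @ValidEncoder 𝓕 𝓚 _ F inst1 inst2 X ε _ H := by
  classical
  let σ : 𝓕 ≃ Fin (Fintype.card 𝓕) := Fintype.equivFin 𝓕
  refine ⟨ZMod 2, inferInstance, inferInstance,
    fun i f => if σ f = i then 1 else 0, ?_⟩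
  intro k
  refine ⟨fun c _ => fun f => c (σ f.1), ?_⟩
  intro w e _
  funext f
  simp [Matrix.mulVec, dotProduct, ite_mul, EmbeddingLike.apply_eq_iff_eq,
    Finset.sum_ite_eq']

/-- Split a vector of weight ≤ 2ε into a difference of two vectors of weight ≤ ε. -/
lemma split_weight {𝓕 : Type} [Fintype 𝓕] {F : Type} [Field F] (ε : ℕ) (d : 𝓕 → F)
    (hd : {f | d f ≠ 0}.ncard ≤ 2 * ε) :
    ∃ e e' : 𝓕 → F, (∀ f, e f - e' f = d f) ∧ (∀ f, d f = 0 → e f = 0 ∧ e' f = 0) ∧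
      {f | e f ≠ 0}.ncard ≤ ε ∧ {f | e' f ≠ 0}.ncard ≤ ε := by
  classical
  set s : Finset 𝓕 := Finset.univ.filter (fun f => d f ≠ 0) with hs
  have hscard : s.card ≤ 2 * ε := by
    have : {f | d f ≠ 0} = ↑s := by ext f; simp [hs]
    rwa [this, Set.ncard_coe_finset] at hd
  obtain ⟨s1, hs1sub, hs1card⟩ := Finset.exists_subset_card_eq (min_le_right ε s.card)
  refine ⟨fun f => if f ∈ s1 then d f else 0,
    fun f => if f ∈ s1 then 0 else if f ∈ s then -d f else 0, ?_, ?_, ?_, ?_⟩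
  · intro f
    by_cases h1 : f ∈ s1
    · simp [h1]
    · by_cases h2 : f ∈ s
      · simp [h1, h2]
      · have : d f = 0 := by
          by_contra h; exact h2 (by simp [hs, h])
        simp [h1, h2, this]
  · intro f hf
    have h2 : f ∉ s := by simp [hs, hf]
    have h1 : f ∉ s1 := fun h => h2 (hs1sub h)
    simp [h1, h2]
  · have hsub : {f | (if f ∈ s1 then d f else 0) ≠ 0} ⊆ ↑s1 := by
      intro f hf; by_contra h; rw [Finset.mem_coe] at h; simp [h] at hf
    calc {f | (if f ∈ s1 then d f else 0) ≠ 0}.ncard ≤ (↑s1 : Set 𝓕).ncard :=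
          Set.ncard_le_ncard hsub (Set.toFinite _)
      _ = s1.card := Set.ncard_coe_finset _
      _ ≤ ε := by rw [hs1card]; exact min_le_left _ _
  · have hsub : {f | (if f ∈ s1 then 0 else if f ∈ s then -d f else 0) ≠ 0} ⊆ ↑(s \ s1) := by
      intro f hf
      simp only [Set.mem_setOf_eq] at hf
      by_cases h1 : f ∈ s1
      · simp [h1] at hf
      · by_cases h2 : f ∈ s
        · simp [Finset.mem_coe, Finset.mem_sdiff]; exact ⟨h2, h1⟩
        · simp [h1, h2] at hf
    calc {f | (if f ∈ s1 then 0 else if f ∈ s then -d f else 0) ≠ 0}.ncard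
        ≤ (↑(s \ s1) : Set 𝓕).ncard := Set.ncard_le_ncard hsub (Set.toFinite _)
      _ = (s \ s1).card := Set.ncard_coe_finset _
      _ ≤ ε := by
          rw [Finset.card_sdiff_of_subset hs1sub, hs1card]
          omega
/-- Lower bound: if `Z ≤ 2ε` then any valid encoder has at least `|𝓕|` rows. -/
lemma lower_bound {𝓕 𝓚 : Type} [Fintype 𝓕] (X : 𝓚 → Finset 𝓕) (ε Z : ℕ)
    (hZ : ∀ k, (X k).card = Z) (hcov : ∀ f : 𝓕, ∃ k, f ∈ X k) (hZε : Z ≤ 2 * ε)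
    {F : Type} [Field F] [Fintype F] {l : ℕ} (H : Matrix (Fin l) 𝓕 F)
    (hH : ValidEncoder F X ε H) : Fintype.card 𝓕 ≤ l := by
  classical
  by_contra hl
  push_neg at hl
  -- obtain a nonzero kernel vector
  have hnotinj : ¬ Function.Injective (Matrix.mulVecLin H) := by
    intro hinj
    have := LinearMap.finrank_le_finrank_of_injective hinj
    simp [Module.finrank_pi] at this
    omega
  have : ∃ v : 𝓕 → F, v ≠ 0 ∧ H.mulVec v = 0 := by
    rw [← LinearMap.ker_eq_bot] at hnotinj
    obtain ⟨v, hv, hv0⟩ := Submodule.ne_bot_iff _ |>.mp hnotinj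
    exact ⟨v, hv0, hv⟩
  obtain ⟨v, hv0, hvker⟩ := this
  obtain ⟨f0, hf0⟩ : ∃ f, v f ≠ 0 := by
    by_contra h; push_neg at h; exact hv0 (funext fun f => h f)
  obtain ⟨k, hfk⟩ := hcov f0
  -- restrict v to X k and split
  set d : 𝓕 → F := fun f => if f ∈ X k then v f else 0 with hd
  have hdw : {f | d f ≠ 0}.ncard ≤ 2 * ε := by
    have hsub : {f | d f ≠ 0} ⊆ ↑(X k) := by
      intro f hf; by_contra h; rw [Finset.mem_coe] at h; simp [hd, h] at hf
    calc {f | d f ≠ 0}.ncard ≤ (↑(X k) : Set 𝓕).ncard :=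
          Set.ncard_le_ncard hsub (Set.toFinite _)
      _ = (X k).card := Set.ncard_coe_finset _
      _ ≤ 2 * ε := by rw [hZ k]; exact hZε
  obtain ⟨e, e', hee', hez, hew, he'w⟩ := split_weight ε d hdw
  set u : 𝓕 → F := fun f => if f ∈ X k then 0 else v f with hu
  set w : 𝓕 → F := fun f => u f - e' f with hw
  have hwe : w + e = v := by
    funext f
    have h1 : e f - e' f = d f := hee' f
    by_cases h : f ∈ X k
    · simp only [hw, hu, hd, Pi.add_apply, h, if_pos] at *
      linear_combination h1
    · have : d f = 0 := by simp [hd, h]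
      obtain ⟨he0, he'0⟩ := hez f this
      simp [hw, hu, h, he0, he'0]
  set w2 : 𝓕 → F := fun f => -e' f with hw2
  have hwe2 : w2 + e' = 0 := by funext f; simp [hw2]
  obtain ⟨D, hD⟩ := hH k
  have hA := hD w e hew
  have hB := hD w2 e' he'w
  have hc1 : H.mulVec (w + e) = H.mulVec (w2 + e') := by
    rw [hwe, hwe2, hvker, Matrix.mulVec_zero]
  have hc2 : (fun f : {f // f ∈ X k} => w f.1) = fun f : {f // f ∈ X k} => w2 f.1 := by
    funext f
    simp [hw, hw2, hu, f.2]
  have key : (fun f : {f // f ∈ X k} => (w + e) f.1) = fun f : {f // f ∈ X k} => (w2 + e') f.1 := by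
    rw [← hA, ← hB, hc1, hc2]
  have := congrFun key ⟨f0, hfk⟩
  rw [hwe, hwe2] at this
  exact hf0 this
/-- Construction: if `2ε < Z` there is a valid encoder with `|𝓕| - 1` rows. -/
lemma mem_sub {𝓕 𝓚 : Type} [Fintype 𝓕] (X : 𝓚 → Finset 𝓕) (ε Z : ℕ)
    (hZ : ∀ k, (X k).card = Z) (h2ε : 2 * ε < Z) (hn : 1 ≤ Fintype.card 𝓕) :
    ∃ (F : Type) (inst1 : Field F) (inst2 : Fintype F)
      (H : Matrix (Fin (Fintype.card 𝓕 - 1)) 𝓕 F),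
      @ValidEncoder 𝓕 𝓚 _ F inst1 inst2 X ε _ H := by
  classical
  set n := Fintype.card 𝓕 with hnn
  let σ : 𝓕 ≃ Fin n := Fintype.equivFin 𝓕
  let f0 : 𝓕 := σ.symm ⟨0, hn⟩
  let g : Fin (n - 1) → 𝓕 := fun i => σ.symm ⟨i.1 + 1, by omega⟩
  set H : Matrix (Fin (n - 1)) 𝓕 (ZMod 2) :=
    fun i f => (if f = g i then 1 else 0) - (if f = f0 then 1 else 0) with hH
  refine ⟨ZMod 2, inferInstance, inferInstance, H, ?_⟩
  have hmul : ∀ (x : 𝓕 → ZMod 2) i, H.mulVec x i = x (g i) - x f0 := by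
    intro x i
    simp [hH, Matrix.mulVec, dotProduct, sub_mul, ite_mul, one_mul, zero_mul,
      Finset.sum_sub_distrib, Finset.sum_ite_eq']
  apply validEncoder_of_unique
  intro k w e w' e' hwt hwt' heq hside
  set v : 𝓕 → ZMod 2 := fun f => (w + e) f - (w' + e') f with hv
  -- v is constant
  have hconst : ∀ f, v f = v f0 := by
    intro f
    by_cases hf : f = f0
    · rw [hf]
    · have hj : (σ f).1 ≠ 0 := by
        intro h
        apply hf
        have : σ f = ⟨0, hn⟩ := Fin.ext h
        rw [← σ.symm_apply_apply f, this]
      have hjlt : (σ f).1 < n := (σ f).2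
      set i : Fin (n - 1) := ⟨(σ f).1 - 1, by omega⟩ with hi
      have hgi : g i = f := by
        have hmk : (⟨i.1 + 1, by omega⟩ : Fin n) = σ f := by
          apply Fin.ext
          simp only [hi, Fin.val_mk]
          omega
        show σ.symm _ = f
        rw [hmk, σ.symm_apply_apply]
      have h1 := hmul (w + e) i
      have h2 := hmul (w' + e') i
      have h3 : H.mulVec (w + e) i = H.mulVec (w' + e') i := congrFun heq i
      rw [h1, h2] at h3
      rw [← hgi]
      simp only [hv]
      linear_combination h3
  -- the constant is zero
  have hc0 : v f0 = 0 := by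
    by_contra hc
    have hsub : (↑(X k) : Set 𝓕) ⊆ {f | e f ≠ 0} ∪ {f | e' f ≠ 0} := by
      intro f hf
      rw [Finset.mem_coe] at hf
      have hvf : v f = v f0 := hconst f
      have hwf : w f = w' f := hside f hf
      have hveq : e f - e' f = v f := by simp only [hv, Pi.add_apply, hwf]; ring
      by_contra hne
      simp only [Set.mem_union, Set.mem_setOf_eq, not_or, not_not] at hne
      rw [hne.1, hne.2] at hveq
      rw [hvf] at hveq
      exact hc (by simpa using hveq.symm)
    have : Z ≤ 2 * ε := by
      calc Z = (X k).card := (hZ k).symm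
        _ = (↑(X k) : Set 𝓕).ncard := (Set.ncard_coe_finset _).symm
        _ ≤ ({f | e f ≠ 0} ∪ {f | e' f ≠ 0}).ncard := Set.ncard_le_ncard hsub (Set.toFinite _)
        _ ≤ {f | e f ≠ 0}.ncard + {f | e' f ≠ 0}.ncard := Set.ncard_union_le _ _
        _ ≤ 2 * ε := by omega
    omega
  intro f _
  have := hconst f
  rw [hc0] at this
  have : v f = 0 := this
  simpa [hv, sub_eq_zero] using this
/-- Assume `ε ≥ 1`, `𝓚` nonempty, `|X k| = Z` for every `k`, and every
subfile is cached at some node. Then `ℓ*(X, ε) = F` iff `Z ≤ 2ε`. -/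
theorem optLen_eq_F_iff {𝓕 𝓚 : Type} [Fintype 𝓕] [Nonempty 𝓚] (X : 𝓚 → Finset 𝓕)
    (ε Z : ℕ) (hε : 1 ≤ ε) (hZ : ∀ k, (X k).card = Z)
    (hcov : ∀ f : 𝓕, ∃ k, f ∈ X k) :
    optLen X ε = Fintype.card 𝓕 ↔ Z ≤ 2 * ε := by
  constructor
  · intro hopt
    by_contra hZ2
    push_neg at hZ2
    have hn : 1 ≤ Fintype.card 𝓕 := by
      obtain ⟨k⟩ := ‹Nonempty 𝓚›
      have hne : (X k).Nonempty := Finset.card_pos.mp (by rw [hZ k]; omega)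
      obtain ⟨f, _⟩ := hne
      exact Fintype.card_pos_iff.mpr ⟨f⟩
    have hle : optLen X ε ≤ Fintype.card 𝓕 - 1 :=
      Nat.sInf_le (mem_sub X ε Z hZ hZ2 hn)
    omega
  · intro hZ2
    apply le_antisymm
    · exact Nat.sInf_le (mem_upper X ε)
    · refine le_csInf ⟨_, mem_upper X ε⟩ ?_
      intro l hl
      obtain ⟨F, i1, i2, H, hH⟩ := hl
      exact lower_bound X ε Z hZ hcov hZ2 H hH
end

section
/- Assume ε ≥ 1 and every subfile index f ∈ 𝓕 belongs to X_k for at least one k ∈ 𝓚. If H is a valid encoder over a finite field F_q for the (X,ε) cache update problem, then any two distinct columns of H are linearly independent (in particular every column is nonzero). -/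
open Matrix Finset

lemma single_ncard_le {𝓕 F : Type} [Field F] (f : 𝓕) (c : F) [DecidableEq 𝓕] :
    {g | (Pi.single f c : 𝓕 → F) g ≠ 0}.ncard ≤ 1 := by
  have hsub : {g | (Pi.single f c : 𝓕 → F) g ≠ 0} ⊆ {f} := by
    intro g hg
    by_contra hgf
    simp only [Set.mem_singleton_iff] at hgf
    simp [Pi.single_apply, hgf] at hg
  calc {g | (Pi.single f c : 𝓕 → F) g ≠ 0}.ncard ≤ ({f} : Set 𝓕).ncard :=
        Set.ncard_le_ncard hsub (Set.finite_singleton f)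
    _ = 1 := Set.ncard_singleton f

lemma aux_zero {𝓕 𝓚 : Type} [Fintype 𝓕] (F : Type) [Field F]
    [Fintype F] (X : 𝓚 → Finset 𝓕) (ε : ℕ) (hε : 1 ≤ ε) {l : ℕ}
    (H : Matrix (Fin l) 𝓕 F) (hH : ValidEncoder F X ε H)
    {f₁ f₂ : 𝓕} {a b : F} (hne : f₁ ≠ f₂) {k : 𝓚} (hk : f₁ ∈ X k)
    (hab : a • (fun i => H i f₁) + b • (fun i => H i f₂) = (0 : Fin l → F)) :
    a = 0 := by
  classical
  obtain ⟨D, hD⟩ := hH k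
  have h1 := hD 0 (Pi.single f₁ (-a)) ((single_ncard_le f₁ (-a)).trans hε)
  have h2 := hD 0 (Pi.single f₂ b) ((single_ncard_le f₂ b).trans hε)
  have hmv : H.mulVec (0 + Pi.single f₁ (-a)) = H.mulVec (0 + Pi.single f₂ b) := by
    funext i
    have := congrFun hab i
    simp only [Pi.add_apply, Pi.smul_apply, smul_eq_mul, Pi.zero_apply] at this
    simp [Matrix.mulVec_single]
    linear_combination -this
  rw [hmv] at h1
  have := congrFun (h1.symm.trans h2) ⟨f₁, hk⟩
  simpa [Pi.single_eq_of_ne hne] using this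

/-- Assume `ε ≥ 1` and every subfile is cached at some node. If `H` is a
valid encoder over a finite field for the `(X, ε)` cache update problem, then every
column of `H` is nonzero, and any two distinct columns are linearly independent. -/
theorem validEncoder_two_columns {𝓕 𝓚 : Type} [Fintype 𝓕] (F : Type) [Field F]
    [Fintype F] (X : 𝓚 → Finset 𝓕) (ε : ℕ) (hε : 1 ≤ ε)
    (hcov : ∀ f : 𝓕, ∃ k, f ∈ X k) {l : ℕ} (H : Matrix (Fin l) 𝓕 F)
    (hH : ValidEncoder F X ε H) :
    (∀ f : 𝓕, (fun i => H i f) ≠ 0) ∧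
      ∀ f₁ f₂ : 𝓕, f₁ ≠ f₂ →
        LinearIndependent F ![fun i => H i f₁, fun i => H i f₂] := by
  classical
  have hnz : ∀ f : 𝓕, (fun i => H i f) ≠ 0 := by
    intro f hf
    obtain ⟨k, hk⟩ := hcov f
    obtain ⟨D, hD⟩ := hH k
    have h1 := hD 0 (Pi.single f 1) ((single_ncard_le f (1:F)).trans hε)
    have h0 := hD 0 0 (by simp)
    have hmv : H.mulVec (0 + Pi.single f 1) = H.mulVec (0 + (0 : 𝓕 → F)) := by
      funext i
      have := congrFun hf i
      simp only [Pi.zero_apply] at this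
      simp [Matrix.mulVec_single, this]
    rw [hmv] at h1
    have := congrFun (h1.symm.trans h0) ⟨f, hk⟩
    simp at this
  refine ⟨hnz, fun f₁ f₂ hne => ?_⟩
  rw [LinearIndependent.pair_iff]
  intro a b hab
  obtain ⟨k₁, hk₁⟩ := hcov f₁
  obtain ⟨k₂, hk₂⟩ := hcov f₂
  have ha : a = 0 := aux_zero F X ε hε H hH hne hk₁ hab
  have hab' : b • (fun i => H i f₂) + a • (fun i => H i f₁) = (0 : Fin l → F) := by
    rw [add_comm] at hab; exact hab
  have hb : b = 0 := aux_zero F X ε hε H hH hne.symm hk₂ hab'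
  exact ⟨ha, hb⟩
end

section
/- Let ε ≥ 1, let L ≤ K, and let π_1, …, π_L ∈ 𝓚 be pairwise distinct node indices. Then every valid encoder over any finite field for the (X,ε) cache update problem has at least Σ_{i=1}^{L} min{ 2ε, |X_{π_i} \ (X_{π_1} ∪ ⋯ ∪ X_{π_{i−1}})| } rows; consequently ℓ*(X,ε) is at least this sum. -/
open Matrix Finset

/-- Any vector of Hamming weight at most `2ε` is a difference of two vectors of
Hamming weight at most `ε`. -/
lemma split_two {𝓕 : Type} [Fintype 𝓕] {F : Type} [Field F]
    (v : 𝓕 → F) (ε : ℕ) (h : {f | v f ≠ 0}.ncard ≤ 2 * ε) :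
    ∃ e e' : 𝓕 → F, v = e - e' ∧ {f | e f ≠ 0}.ncard ≤ ε ∧ {f | e' f ≠ 0}.ncard ≤ ε := by
  classical
  set T : Finset 𝓕 := Finset.univ.filter (fun f => v f ≠ 0) with hT
  have hTset : {f | v f ≠ 0} = ↑T := by ext f; simp [hT]
  have hTcard : T.card ≤ 2 * ε := by rwa [hTset, Set.ncard_coe_finset] at h
  obtain ⟨T₁, hsub, hcard⟩ := Finset.exists_subset_card_eq (s := T) (n := min ε T.card) (min_le_right _ _)
  refine ⟨fun f => if f ∈ T₁ then v f else 0, fun f => if f ∈ T₁ then 0 else -v f, ?_, ?_, ?_⟩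
  · funext f; by_cases hf : f ∈ T₁ <;> simp [hf]
  · have hss : {f | (if f ∈ T₁ then v f else 0) ≠ 0} ⊆ ↑T₁ := by
      intro f hf
      simp only [Set.mem_setOf_eq] at hf
      by_cases h1 : f ∈ T₁
      · exact h1
      · simp [h1] at hf
    calc {f | (if f ∈ T₁ then v f else 0) ≠ 0}.ncard ≤ (↑T₁ : Set 𝓕).ncard :=
          Set.ncard_le_ncard hss T₁.finite_toSet
      _ = T₁.card := Set.ncard_coe_finset _
      _ ≤ ε := by omega
  · have hss : {f | (if f ∈ T₁ then 0 else -v f) ≠ 0} ⊆ ↑(T \ T₁) := by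
      intro f hf
      simp only [Set.mem_setOf_eq] at hf
      by_cases h1 : f ∈ T₁
      · simp [h1] at hf
      · simp only [h1, if_false, ne_eq, neg_eq_zero] at hf
        simp [Finset.mem_sdiff, hT, h1, hf]
    calc {f | (if f ∈ T₁ then 0 else -v f) ≠ 0}.ncard ≤ (↑(T \ T₁) : Set 𝓕).ncard :=
          Set.ncard_le_ncard hss (T \ T₁).finite_toSet
      _ = (T \ T₁).card := Set.ncard_coe_finset _
      _ ≤ ε := by
          have h1 := Finset.card_sdiff_of_subset hsub
          have h2 := Finset.card_le_card hsub
          omega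

/-- Core lower bound: any valid encoder has at least
`∑ i, min (2ε) |X (π i) \ ⋃_{j<i} X (π j)|` rows. -/
lemma encoder_lower_bound {𝓕 𝓚 : Type} [Fintype 𝓕] [DecidableEq 𝓕]
    (X : 𝓚 → Finset 𝓕) (ε : ℕ) (L : ℕ) (π : Fin L → 𝓚)
    (F : Type) [Field F] [Fintype F] (l : ℕ) (H : Matrix (Fin l) 𝓕 F)
    (hH : ValidEncoder F X ε H) :
    ∑ i : Fin L,
      min (2 * ε) ((X (π i) \ (Finset.Iio i).biUnion (fun j => X (π j))).card) ≤ l := by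
  classical
  set A : Fin L → Finset 𝓕 :=
    fun i => X (π i) \ (Finset.Iio i).biUnion (fun j => X (π j)) with hA
  choose S hS₁ hS₂ using fun i : Fin L =>
    Finset.exists_subset_card_eq (s := A i) (n := min (2 * ε) (A i).card) (min_le_right _ _)
  have hSX : ∀ i, S i ⊆ X (π i) := fun i => (hS₁ i).trans Finset.sdiff_subset
  have hdisjX : ∀ i j : Fin L, i < j → ∀ f ∈ S j, f ∉ X (π i) := by
    intro i j hij f hf hfx
    have h1 := hS₁ j hf
    rw [hA, Finset.mem_sdiff] at h1
    exact h1.2 (Finset.mem_biUnion.mpr ⟨i, Finset.mem_Iio.mpr hij, hfx⟩)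
  have hdisj : ∀ i ∈ (Finset.univ : Finset (Fin L)), ∀ j ∈ Finset.univ,
      i ≠ j → Disjoint (S i) (S j) := by
    intro i _ j _ hij
    rcases lt_or_gt_of_ne hij with h | h
    · exact Finset.disjoint_left.mpr fun f hfi hfj => hdisjX i j h f hfj (hSX i hfi)
    · exact Finset.disjoint_left.mpr fun f hfi hfj => hdisjX j i h f hfi (hSX j hfj)
  set 𝒮 : Finset 𝓕 := Finset.univ.biUnion S with h𝒮
  -- the key claim: a vector in the kernel of H supported on 𝒮 is zero
  have key : ∀ d : 𝓕 → F, H.mulVec d = 0 → (∀ f, d f ≠ 0 → f ∈ 𝒮) → d = 0 := by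
    intro d hker hsupp
    by_contra hd0
    set I : Finset (Fin L) := Finset.univ.filter (fun i => ∃ f ∈ S i, d f ≠ 0) with hI
    have hIne : I.Nonempty := by
      obtain ⟨f, hf⟩ : ∃ f, d f ≠ 0 := by
        by_contra h
        push_neg at h
        exact hd0 (funext fun f => h f)
      obtain ⟨i, _, hfS⟩ := Finset.mem_biUnion.mp (hsupp f hf)
      exact ⟨i, Finset.mem_filter.mpr ⟨Finset.mem_univ _, f, hfS, hf⟩⟩
    set i₀ : Fin L := I.min' hIne with hi₀
    obtain ⟨f₀, hf₀S, hf₀d⟩ := (Finset.mem_filter.mp (I.min'_mem hIne)).2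
    set d'' : 𝓕 → F := fun f => if f ∈ S i₀ then d f else 0 with hd''
    have hdX : ∀ f ∈ X (π i₀), f ∉ S i₀ → d f = 0 := by
      intro f hfX hfS
      by_contra hdf
      obtain ⟨j, _, hfSj⟩ := Finset.mem_biUnion.mp (hsupp f hdf)
      have hij : ¬ (i₀ < j) := fun h => hdisjX i₀ j h f hfSj hfX
      have hji : ¬ (j < i₀) := by
        intro h
        have hjI : j ∈ I := Finset.mem_filter.mpr ⟨Finset.mem_univ _, f, hfSj, hdf⟩
        exact absurd (I.min'_le j hjI) (not_le.mpr h)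
      have hje : j = i₀ := le_antisymm (not_lt.mp hij) (not_lt.mp hji)
      exact hfS (hje ▸ hfSj)
    have hwt : {f | d'' f ≠ 0}.ncard ≤ 2 * ε := by
      have hss : {f | d'' f ≠ 0} ⊆ ↑(S i₀) := by
        intro f hf
        simp only [Set.mem_setOf_eq, hd''] at hf
        by_cases h1 : f ∈ S i₀
        · exact h1
        · simp [h1] at hf
      calc {f | d'' f ≠ 0}.ncard ≤ (↑(S i₀) : Set 𝓕).ncard :=
            Set.ncard_le_ncard hss (S i₀).finite_toSet
        _ = (S i₀).card := Set.ncard_coe_finset _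
        _ ≤ 2 * ε := by rw [hS₂ i₀]; exact min_le_left _ _
    obtain ⟨e, e', hee', hwe, hwe'⟩ := split_two d'' ε hwt
    obtain ⟨D, hD⟩ := hH (π i₀)
    set w₂ : 𝓕 → F := e - d - e' with hw₂
    have hd''eq : ∀ f, d'' f = e f - e' f := fun f => by
      have := congrFun hee' f; simpa using this
    have hw₂X : ∀ f ∈ X (π i₀), w₂ f = 0 := by
      intro f hfX
      have h1 : w₂ f = d'' f - d f := by
        simp only [hw₂, Pi.sub_apply]
        rw [hd''eq f]; ring
      by_cases hfS : f ∈ S i₀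
      · rw [h1]; simp [hd'', hfS]
      · rw [h1]; simp [hd'', hfS, hdX f hfX hfS]
    have h1 := hD 0 e hwe
    have h2 := hD w₂ e' hwe'
    have hmv : H.mulVec (w₂ + e') = H.mulVec (0 + e) := by
      have hsum : w₂ + e' = (0 + e) - d := by
        funext f
        simp only [hw₂, Pi.add_apply, Pi.sub_apply, Pi.zero_apply]
        ring
      rw [hsum, Matrix.mulVec_sub, hker, sub_zero]
    have hside : (fun f : {f // f ∈ X (π i₀)} => w₂ f.1) =
        (fun f : {f // f ∈ X (π i₀)} => (0 : 𝓕 → F) f.1) := by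
      funext f
      simp [hw₂X f.1 f.2]
    rw [hmv, hside] at h2
    rw [h1] at h2
    have := congrFun h2 ⟨f₀, hSX i₀ hf₀S⟩
    simp only [Pi.add_apply, Pi.zero_apply, zero_add] at this
    have hw₂f₀ : w₂ f₀ = 0 := hw₂X f₀ (hSX i₀ hf₀S)
    have hd''f₀ : d'' f₀ = d f₀ := by simp only [hd'']; exact if_pos hf₀S
    have : d f₀ = 0 := by
      rw [← hd''f₀, hd''eq f₀, this, hw₂f₀]; ring
    exact hf₀d this
  -- now conclude via an injective linear map (↥𝒮 → F) →ₗ (Fin l → F)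
  let ext : (↥𝒮 → F) →ₗ[F] (𝓕 → F) :=
    { toFun := fun g f => if h : f ∈ 𝒮 then g ⟨f, h⟩ else 0
      map_add' := by intro a b; funext f; by_cases h : f ∈ 𝒮 <;> simp [h]
      map_smul' := by intro c a; funext f; by_cases h : f ∈ 𝒮 <;> simp [h] }
  let φ : (↥𝒮 → F) →ₗ[F] (Fin l → F) := (Matrix.mulVecLin H).comp ext
  have hφinj : Function.Injective φ := by
    rw [← LinearMap.ker_eq_bot, LinearMap.ker_eq_bot']
    intro g hg
    have hext : ext g = 0 := by
      apply key
      · simpa [φ, Matrix.mulVecLin_apply] using hg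
      · intro f hf
        by_cases h : f ∈ 𝒮
        · exact h
        · exfalso; apply hf; simp [ext, h]
    funext x
    have := congrFun hext x.1
    simpa [ext, x.2] using this
  have hdim := LinearMap.finrank_le_finrank_of_injective hφinj
  rw [Module.finrank_fintype_fun_eq_card, Module.finrank_fin_fun] at hdim
  have hcard𝒮 : 𝒮.card = ∑ i : Fin L, min (2 * ε) ((A i).card) := by
    rw [h𝒮, Finset.card_biUnion hdisj]
    exact Finset.sum_congr rfl fun i _ => hS₂ i
  calc ∑ i : Fin L, min (2 * ε) ((A i).card) = 𝒮.card := hcard𝒮.symm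
    _ = Fintype.card ↥𝒮 := (Fintype.card_coe 𝒮).symm
    _ ≤ l := hdim

/-- The identity-like encoder shows the defining set of `optLen` is nonempty. -/
lemma optLen_set_nonempty {𝓕 𝓚 : Type} [Fintype 𝓕] [DecidableEq 𝓕]
    (X : 𝓚 → Finset 𝓕) (ε : ℕ) :
    {l : ℕ | ∃ (F : Type) (inst1 : Field F) (inst2 : Fintype F)
      (H : Matrix (Fin l) 𝓕 F), @ValidEncoder 𝓕 𝓚 _ F inst1 inst2 X ε l H}.Nonempty := by
  haveI : Fact (Nat.Prime 2) := ⟨Nat.prime_two⟩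
  classical
  set n := Fintype.card 𝓕 with hn
  set eqv : Fin n ≃ 𝓕 := (Fintype.equivFin 𝓕).symm with heqv
  refine ⟨n, ZMod 2, inferInstance, inferInstance,
    fun i f => if f = eqv i then 1 else 0, ?_⟩
  intro k
  refine ⟨fun c s => fun f => c (eqv.symm f.1), ?_⟩
  intro w e _
  funext f
  have : (Matrix.mulVec (fun i f => if f = eqv i then (1 : ZMod 2) else 0) (w + e))
      (eqv.symm f.1) = (w + e) f.1 := by
    simp only [Matrix.mulVec, dotProduct]
    rw [Finset.sum_eq_single f.1]
    · simp
    · intro b _ hb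
      simp only [Equiv.apply_symm_apply]
      rw [if_neg hb, zero_mul]
    · intro h; exact absurd (Finset.mem_univ _) h
  simpa using this

/-- Let `ε ≥ 1`, `L ≤ K` and let `π₁, …, π_L` be pairwise distinct node
indices. Every valid encoder (over any finite field) has at least
`∑_{i=1}^{L} min{2ε, |X_{π_i} \ (X_{π_1} ∪ ⋯ ∪ X_{π_{i−1}})|}` rows; consequently
`ℓ*(X, ε)` is at least this sum. -/
theorem generic_lower_bound {𝓕 𝓚 : Type} [Fintype 𝓕] [DecidableEq 𝓕] [Fintype 𝓚]
    (X : 𝓚 → Finset 𝓕) (ε : ℕ) (hε : 1 ≤ ε) (L : ℕ) (hL : L ≤ Fintype.card 𝓚)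
    (π : Fin L → 𝓚) (hπ : Function.Injective π) :
    (∀ (F : Type) (inst1 : Field F) (inst2 : Fintype F) (l : ℕ)
        (H : Matrix (Fin l) 𝓕 F), @ValidEncoder 𝓕 𝓚 _ F inst1 inst2 X ε l H →
        ∑ i : Fin L,
          min (2 * ε) ((X (π i) \ (Finset.Iio i).biUnion (fun j => X (π j))).card) ≤ l) ∧
      ∑ i : Fin L,
          min (2 * ε) ((X (π i) \ (Finset.Iio i).biUnion (fun j => X (π j))).card) ≤
        optLen X ε := by
  constructor
  · intro F inst1 inst2 l H hH
    exact encoder_lower_bound X ε L π F l H hH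
  · apply le_csInf (optLen_set_nonempty X ε)
    rintro b ⟨F, inst1, inst2, H, hH⟩
    exact encoder_lower_bound X ε L π F b H hH
end

section
/- For the Shangguan et al. Construction-I placement with parameters n, a, b (positive integers, a + b ≤ n), if ε ≥ 1 and Z = C(n,a) − C(n−b,a) ≥ 2ε + 1, then ℓ*(X,ε) ≥ 2ε + Σ_{j=0}^{n−b−1} min{ 2ε, C(j, a−1) }. -/
open Matrix Finset

lemma decoder_kernel {𝓕 𝓚 : Type} [Fintype 𝓕] {F : Type} [Field F] [Fintype F]
    {X : 𝓚 → Finset 𝓕} {ε : ℕ} {l : ℕ} {H : Matrix (Fin l) 𝓕 F}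
    (hH : ValidEncoder F X ε H) (k : 𝓚) (z : 𝓕 → F) (hz : H.mulVec z = 0)
    (S : Finset 𝓕) (hS : ∀ f, z f ≠ 0 → f ∈ X k → f ∈ S) (hScard : S.card ≤ 2 * ε) :
    ∀ f ∈ X k, z f = 0 := by
  classical
  set S' : Finset 𝓕 := S.filter (fun f => z f ≠ 0 ∧ f ∈ X k) with hS'def
  have hS'card : S'.card ≤ 2 * ε := le_trans (Finset.card_filter_le _ _) hScard
  have hmemS' : ∀ f, f ∈ S' ↔ (z f ≠ 0 ∧ f ∈ X k) := by
    intro f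
    constructor
    · intro hf; exact (Finset.mem_filter.1 hf).2
    · intro hf; exact Finset.mem_filter.2 ⟨hS f hf.1 hf.2, hf⟩
  obtain ⟨S1, hS1sub, hS1card⟩ := S'.exists_subset_card_eq (min_le_right ε S'.card)
  set S2 : Finset 𝓕 := S' \ S1 with hS2def
  have hS1le : S1.card ≤ ε := by rw [hS1card]; exact min_le_left _ _
  have hS2le : S2.card ≤ ε := by
    rw [hS2def, Finset.card_sdiff_of_subset hS1sub, hS1card]
    omega
  set e : 𝓕 → F := fun f => if f ∈ S1 then z f else 0 with hedef
  set e' : 𝓕 → F := fun f => if f ∈ S2 then -z f else 0 with he'def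
  set w : 𝓕 → F := -e with hwdef
  set w' : 𝓕 → F := -z - e' with hw'def
  have hesupp : {f | e f ≠ 0}.ncard ≤ ε := by
    refine le_trans (le_trans (Set.ncard_le_ncard ?_ S1.finite_toSet)
      (le_of_eq (Set.ncard_coe_finset S1))) hS1le
    intro f hf
    simp only [Set.mem_setOf_eq, hedef] at hf
    by_cases h : f ∈ S1
    · exact Finset.mem_coe.2 h
    · simp [h] at hf
  have he'supp : {f | e' f ≠ 0}.ncard ≤ ε := by
    refine le_trans (le_trans (Set.ncard_le_ncard ?_ S2.finite_toSet)
      (le_of_eq (Set.ncard_coe_finset S2))) hS2le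
    intro f hf
    simp only [Set.mem_setOf_eq, he'def] at hf
    by_cases h : f ∈ S2
    · exact Finset.mem_coe.2 h
    · simp [h] at hf
  obtain ⟨D, hD⟩ := hH k
  have h1 := hD w e hesupp
  have h2 := hD w' e' he'supp
  have hwe : w + e = 0 := by funext f; simp [hwdef]
  have hwe' : w' + e' = -z := by funext f; simp [hw'def]
  have hmv1 : H.mulVec (w + e) = 0 := by rw [hwe, Matrix.mulVec_zero]
  have hmv2 : H.mulVec (w' + e') = 0 := by rw [hwe', Matrix.mulVec_neg, hz, neg_zero]
  have hside : (fun f : {f // f ∈ X k} => w f.1) = (fun f : {f // f ∈ X k} => w' f.1) := by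
    funext f
    obtain ⟨f, hf⟩ := f
    simp only [hwdef, hw'def, hedef, he'def, Pi.neg_apply, Pi.sub_apply]
    by_cases hzf : z f = 0
    · have hf1 : f ∉ S1 := fun hc => by
        have := (hmemS' f).1 (hS1sub hc); exact this.1 hzf
      have hf2 : f ∉ S2 := fun hc => by
        have := (hmemS' f).1 (Finset.sdiff_subset hc); exact this.1 hzf
      simp [hf1, hf2, hzf]
    · have hfS' : f ∈ S' := (hmemS' f).2 ⟨hzf, hf⟩
      by_cases hf1 : f ∈ S1
      · have hf2 : f ∉ S2 := by simp [hS2def, hf1]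
        simp [hf1, hf2]
      · have hf2 : f ∈ S2 := Finset.mem_sdiff.2 ⟨hfS', hf1⟩
        simp [hf1, hf2]
  rw [hmv1, hside] at h1
  rw [hmv2] at h2
  rw [h1] at h2
  intro f hf
  have := congrFun h2 ⟨f, hf⟩
  simp only [hwe, hwe', Pi.zero_apply, Pi.neg_apply] at this
  exact neg_eq_zero.mp this.symm

lemma card_le_of_indep {𝓕 : Type} [Fintype 𝓕] {F : Type} [Field F] {l : ℕ}
    (H : Matrix (Fin l) 𝓕 F) (T : Finset 𝓕)
    (hker : ∀ z : 𝓕 → F, H.mulVec z = 0 → (∀ f, f ∉ T → z f = 0) → ∀ f, z f = 0) :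
    T.card ≤ l := by
  classical
  have hli : LinearIndependent F (fun t : {x // x ∈ T} => (fun i => H i t.1 : Fin l → F)) := by
    rw [Fintype.linearIndependent_iff]
    intro g hg t
    set z : 𝓕 → F := fun f => if h : f ∈ T then g ⟨f, h⟩ else 0 with hzdef
    have hmv : H.mulVec z = 0 := by
      funext i
      have h1 : H.mulVec z i = ∑ f ∈ T, H i f * z f := by
        rw [Matrix.mulVec, dotProduct]
        refine (Finset.sum_subset T.subset_univ ?_).symm
        intro f _ hf
        simp [hzdef, hf]
      rw [h1]
      have h2 : ∑ f ∈ T, H i f * z f = ∑ t ∈ T.attach, g t * H i t.1 := by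
        rw [← Finset.sum_attach T (fun f => H i f * z f)]
        refine Finset.sum_congr rfl ?_
        intro t _
        simp [hzdef, t.2, mul_comm]
      rw [h2]
      have := congrFun hg i
      simpa [Finset.sum_apply] using this
    have hz0 := hker z hmv (fun f hf => by simp [hzdef, hf]) t.1
    simpa [hzdef, t.2] using hz0
  have h1 : Fintype.card {x // x ∈ T} ≤ Module.finrank F (Fin l → F) :=
    hli.fintype_card_le_finrank
  simpa using h1

/-- For the Shangguan et al. Construction-I placement with parameters
`n, a, b` (subfiles: `a`-subsets of `{1,…,n}`, nodes: `b`-subsets, `f ∈ X k ↔ f ∩ k ≠ ∅`),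
if `ε ≥ 1` and `Z = C(n,a) − C(n−b,a) ≥ 2ε + 1`, then
`ℓ*(X, ε) ≥ 2ε + ∑_{j=0}^{n−b−1} min{2ε, C(j, a−1)}`. -/
theorem shangguan_lower_bound (n a b : ℕ) (ha : 0 < a) (hb : 0 < b) (hab : a + b ≤ n)
    (ε : ℕ) (hε : 1 ≤ ε)
    (hZ : 2 * ε + 1 ≤ Nat.choose n a - Nat.choose (n - b) a) :
    2 * ε + ∑ j ∈ Finset.range (n - b), min (2 * ε) (Nat.choose j (a - 1)) ≤
      optLen (fun k : {s : Finset (Fin n) // s.card = b} =>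
        Finset.univ.filter (fun f : {s : Finset (Fin n) // s.card = a} =>
          (f.1 ∩ k.1).Nonempty)) ε := by
  classical
  set X : {s : Finset (Fin n) // s.card = b} → Finset {s : Finset (Fin n) // s.card = a} :=
    fun k => Finset.univ.filter (fun f => (f.1 ∩ k.1).Nonempty) with hXdef
  set m : ℕ := n - b with hm
  have hbn : b ≤ n := by omega
  -- the sliding-window node sets
  set KF : ℕ → Finset (Fin n) := fun i => univ.filter (fun x => i ≤ x.1 ∧ x.1 < i + b)
    with hKFdef
  have cardKF : ∀ i, i ≤ m → (KF i).card = b := by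
    intro i hi
    have hin : i + b ≤ n := by omega
    have heq : KF i = (Finset.Ico i (i+b)).attachFin
        (fun x hx => lt_of_lt_of_le (Finset.mem_Ico.1 hx).2 hin) := by
      ext x
      simp [hKFdef, Finset.mem_attachFin, Finset.mem_Ico]
    rw [heq, Finset.card_attachFin, Nat.card_Ico]
    omega
  -- total number of subfiles
  have hcardF : Fintype.card {s : Finset (Fin n) // s.card = a} = Nat.choose n a := by
    rw [Fintype.card_finset_len, Fintype.card_fin]
  -- the first block T0
  have hT0ex : ∃ T0 : Finset {s : Finset (Fin n) // s.card = a},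
      T0 ⊆ univ.filter (fun f => (f.1 ∩ KF 0).Nonempty) ∧ T0.card = 2 * ε := by
    set Pos := univ.filter (fun f : {s : Finset (Fin n) // s.card = a} => (f.1 ∩ KF 0).Nonempty)
      with hPos
    set Neg := univ.filter (fun f : {s : Finset (Fin n) // s.card = a} => ¬ (f.1 ∩ KF 0).Nonempty)
      with hNeg
    have hsplit : Pos.card + Neg.card = Nat.choose n a := by
      rw [hPos, hNeg, Finset.card_filter_add_card_filter_not, Finset.card_univ, hcardF]
    have hNegle : Neg.card ≤ Nat.choose m a := by
      have hcardsd : (univ \ KF 0).card = m := by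
        rw [Finset.card_sdiff_of_subset (Finset.subset_univ _), Finset.card_univ, Fintype.card_fin,
          cardKF 0 (Nat.zero_le m), hm]
      have htarget : ((univ \ KF 0).powersetCard a).card = Nat.choose m a := by
        rw [Finset.card_powersetCard, hcardsd]
      rw [← htarget]
      refine Finset.card_le_card_of_injOn (fun f => f.1) ?_ ?_
      · intro f hf
        rw [hNeg, Finset.mem_coe, Finset.mem_filter, Finset.not_nonempty_iff_eq_empty] at hf
        refine Finset.mem_powersetCard.2 ⟨?_, f.2⟩
        intro x hx
        refine Finset.mem_sdiff.2 ⟨Finset.mem_univ x, ?_⟩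
        intro hxK
        have : x ∈ f.1 ∩ KF 0 := Finset.mem_inter.2 ⟨hx, hxK⟩
        rw [hf.2] at this
        exact absurd this (Finset.notMem_empty x)
      · intro f _ g _ hfg
        exact Subtype.ext hfg
    have hle : 2 * ε ≤ Pos.card := by omega
    obtain ⟨T0, hT0sub, hT0card⟩ := Finset.exists_subset_card_eq hle
    exact ⟨T0, hT0sub, hT0card⟩
  obtain ⟨T0, hT0sub, hT0card⟩ := hT0ex
  -- a default subfile
  have hf0ex : ∃ s : Finset (Fin n), s ⊆ univ ∧ s.card = a := by
    refine Finset.exists_subset_card_eq ?_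
    rw [Finset.card_univ, Fintype.card_fin]; omega
  obtain ⟨s0, _, hs0⟩ := hf0ex
  set f0 : {s : Finset (Fin n) // s.card = a} := ⟨s0, hs0⟩ with hf0
  -- the later blocks
  have hBex : ∀ i, 1 ≤ i → i ≤ m → ∃ Ti : Finset {s : Finset (Fin n) // s.card = a},
      (∀ f ∈ Ti, (∃ x ∈ f.1, x.val = i + b - 1) ∧ ∀ x ∈ f.1, i + b - 1 ≤ x.val) ∧
      Ti.card = min (2 * ε) (Nat.choose (m - i) (a - 1)) := by
    intro i hi1 him
    have hibn : i + b ≤ n := by omega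
    set B := univ.filter (fun f : {s : Finset (Fin n) // s.card = a} =>
      (∃ x ∈ f.1, x.val = i + b - 1) ∧ ∀ x ∈ f.1, i + b - 1 ≤ x.val) with hBdef
    set s : Finset (Fin n) := (Finset.Ico (i+b) n).attachFin
      (fun x hx => (Finset.mem_Ico.1 hx).2) with hsdef
    have hscard : s.card = m - i := by
      rw [hsdef, Finset.card_attachFin, Nat.card_Ico]; omega
    set x0 : Fin n := ⟨i + b - 1, by omega⟩ with hx0def
    have hx0g : ∀ g ∈ s.powersetCard (a-1), x0 ∉ g := by
      intro g hg hx
      have hsub := (Finset.mem_powersetCard.1 hg).1 hx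
      rw [hsdef, Finset.mem_attachFin, Finset.mem_Ico] at hsub
      have : x0.val = i + b - 1 := rfl
      omega
    have hcardB : Nat.choose (m - i) (a - 1) ≤ B.card := by
      have hsrc : (s.powersetCard (a-1)).card = Nat.choose (m - i) (a - 1) := by
        rw [Finset.card_powersetCard, hscard]
      rw [← hsrc]
      refine Finset.card_le_card_of_injOn
        (fun g => if h : (insert x0 g).card = a then ⟨insert x0 g, h⟩ else f0) ?_ ?_
      · intro g hg
        have hcard : (insert x0 g).card = a := by
          rw [Finset.card_insert_of_notMem (hx0g g hg), (Finset.mem_powersetCard.1 hg).2]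
          omega
        dsimp only
        rw [dif_pos hcard]
        rw [hBdef, Finset.mem_coe, Finset.mem_filter]
        refine ⟨Finset.mem_univ _, ⟨x0, Finset.mem_insert_self _ _, rfl⟩, ?_⟩
        intro x hx
        rcases Finset.mem_insert.1 hx with h | h
        · rw [h]
        · have := (Finset.mem_powersetCard.1 hg).1 h
          rw [hsdef, Finset.mem_attachFin, Finset.mem_Ico] at this
          omega
      · intro g hg g' hg' heq
        dsimp only at heq
        have hcard : (insert x0 g).card = a := by
          rw [Finset.card_insert_of_notMem (hx0g g hg), (Finset.mem_powersetCard.1 hg).2]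
          omega
        have hcard' : (insert x0 g').card = a := by
          rw [Finset.card_insert_of_notMem (hx0g g' hg'), (Finset.mem_powersetCard.1 hg').2]
          omega
        rw [dif_pos hcard, dif_pos hcard'] at heq
        have hins : insert x0 g = insert x0 g' := congrArg Subtype.val heq
        calc g = (insert x0 g).erase x0 := (Finset.erase_insert (hx0g g hg)).symm
          _ = (insert x0 g').erase x0 := by rw [hins]
          _ = g' := Finset.erase_insert (hx0g g' hg')
    obtain ⟨Ti, hsub, hcard⟩ :=
      Finset.exists_subset_card_eq (le_trans (min_le_right _ _) hcardB)
    refine ⟨Ti, ?_, hcard⟩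
    intro f hf
    exact (Finset.mem_filter.1 (hsub hf)).2
  choose! TT hTT using hBex
  set Tfun : ℕ → Finset {s : Finset (Fin n) // s.card = a} :=
    fun i => if i = 0 then T0 else TT i with hTfundef
  set T := (range (m+1)).biUnion Tfun with hTdef
  -- basic facts about the blocks
  have F1 : ∀ i, i ≤ m → ∀ f ∈ Tfun i, (f.1 ∩ KF i).Nonempty := by
    intro i hi f hf
    simp only [hTfundef] at hf
    by_cases h0 : i = 0
    · subst h0
      rw [if_pos rfl] at hf
      exact (Finset.mem_filter.1 (hT0sub hf)).2
    · rw [if_neg h0] at hf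
      obtain ⟨⟨x, hxmem, hxval⟩, _⟩ := ((hTT i (Nat.one_le_iff_ne_zero.2 h0) hi).1) f hf
      refine ⟨x, Finset.mem_inter.2 ⟨hxmem, ?_⟩⟩
      rw [hKFdef, Finset.mem_filter]
      exact ⟨Finset.mem_univ x, by omega, by omega⟩
  have F2 : ∀ i, i ≤ m → (Tfun i).card ≤ 2 * ε := by
    intro i hi
    simp only [hTfundef]
    by_cases h0 : i = 0
    · rw [if_pos h0, hT0card]
    · rw [if_neg h0, (hTT i (Nat.one_le_iff_ne_zero.2 h0) hi).2]
      exact min_le_left _ _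
  have F3 : ∀ i j, i < j → j ≤ m → ∀ f ∈ Tfun j, f.1 ∩ KF i = ∅ := by
    intro i j hij hjm f hf
    have hj0 : j ≠ 0 := by omega
    simp only [hTfundef] at hf
    rw [if_neg hj0] at hf
    have hprop := ((hTT j (Nat.one_le_iff_ne_zero.2 hj0) hjm).1) f hf
    rw [Finset.eq_empty_iff_forall_notMem]
    intro x hx
    obtain ⟨hxf, hxK⟩ := Finset.mem_inter.1 hx
    have h1 := hprop.2 x hxf
    rw [hKFdef, Finset.mem_filter] at hxK
    omega
  have hdisj : ∀ i ∈ range (m+1), ∀ j ∈ range (m+1), i ≠ j → Disjoint (Tfun i) (Tfun j) := by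
    have key : ∀ i j, i < j → j ≤ m → Disjoint (Tfun i) (Tfun j) := by
      intro i j hij hjm
      rw [Finset.disjoint_left]
      intro f hfi hfj
      have h1 := F1 i (by omega) f hfi
      have h2 := F3 i j hij hjm f hfj
      rw [h2] at h1
      exact absurd h1 (by simp)
    intro i hi j hj hij
    rw [Finset.mem_range, Nat.lt_succ_iff] at hi hj
    rcases lt_or_gt_of_ne hij with h | h
    · exact key i j h hj
    · exact (key j i h hi).symm
  have cardT : T.card = 2 * ε + ∑ j ∈ range m, min (2 * ε) (Nat.choose j (a - 1)) := by
    rw [hTdef, Finset.card_biUnion hdisj, Finset.sum_range_succ']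
    have h0 : (Tfun 0).card = 2 * ε := by simp only [hTfundef]; simpa using hT0card
    have hstep : ∀ i ∈ range m, (Tfun (i+1)).card
        = min (2 * ε) (Nat.choose (m - 1 - i) (a - 1)) := by
      intro i hi
      rw [Finset.mem_range] at hi
      simp only [hTfundef]
      rw [if_neg (by omega : ¬(i + 1 = 0)), (hTT (i+1) (by omega) (by omega)).2]
      congr 2
      omega
    rw [Finset.sum_congr rfl hstep, h0,
      Finset.sum_range_reflect (fun j => min (2 * ε) (Nat.choose j (a - 1))) m]
    omega
  -- nonemptiness of the achievability set
  have hne : {l : ℕ | ∃ (F : Type) (inst1 : Field F) (inst2 : Fintype F)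
      (H : Matrix (Fin l) {s : Finset (Fin n) // s.card = a} F),
      @ValidEncoder _ _ _ F inst1 inst2 X ε l H}.Nonempty := by
    haveI : Fact (Nat.Prime 2) := ⟨by norm_num⟩
    set l0 := Fintype.card {s : Finset (Fin n) // s.card = a} with hl0
    set eqv := Fintype.equivFin {s : Finset (Fin n) // s.card = a} with heqv
    refine ⟨l0, ZMod 2, inferInstance, inferInstance,
      Matrix.of (fun i f => if f = eqv.symm i then (1 : ZMod 2) else 0), ?_⟩
    intro k
    refine ⟨fun y _ => fun f => y (eqv f.1), ?_⟩
    intro w e hwt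
    funext f
    have hmv : ∀ (v : {s : Finset (Fin n) // s.card = a} → ZMod 2) (i : Fin l0),
        (Matrix.of (fun i f => if f = eqv.symm i then (1 : ZMod 2) else 0)).mulVec v i
          = v (eqv.symm i) := by
      intro v i
      simp [Matrix.mulVec, dotProduct, ite_mul, Finset.sum_ite_eq]
    show ((Matrix.of (fun i f => if f = eqv.symm i then (1 : ZMod 2) else 0)).mulVec (w + e))
      (eqv f.1) = (w + e) f.1
    rw [hmv (w + e) (eqv f.1), Equiv.symm_apply_apply]
  -- conclusion
  rw [optLen]
  refine le_csInf hne ?_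
  rintro l ⟨F, iF, iF2, H, hH⟩
  have hker : ∀ z : {s : Finset (Fin n) // s.card = a} → F,
      H.mulVec z = 0 → (∀ f, f ∉ T → z f = 0) → ∀ f, z f = 0 := by
    intro z hz hsupp
    have key : ∀ i, i ≤ m → ∀ f ∈ Tfun i, z f = 0 := by
      intro i
      induction i using Nat.strong_induction_on with
      | _ i IH =>
        intro him f hf
        set k : {s : Finset (Fin n) // s.card = b} := ⟨KF i, cardKF i him⟩ with hk
        have hXmem : ∀ g : {s : Finset (Fin n) // s.card = a},
            g ∈ X k ↔ (g.1 ∩ KF i).Nonempty := by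
          intro g
          rw [hXdef]
          simp [hk]
        have hmemb : ∀ g, z g ≠ 0 → g ∈ X k → g ∈ Tfun i := by
          intro g hg hXg
          by_contra hgT
          have hgInT : g ∈ T := by
            by_contra h
            exact hg (hsupp g h)
          rw [hTdef] at hgInT
          obtain ⟨j, hjmem, hgj⟩ := Finset.mem_biUnion.1 hgInT
          have hjm : j ≤ m := by
            have := Finset.mem_range.1 hjmem
            omega
          rcases lt_trichotomy j i with h | h | h
          · exact hg (IH j h hjm g hgj)
          · exact hgT (h ▸ hgj)
          · have hempty := F3 i j h hjm g hgj
            rw [hXmem] at hXg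
            rw [hempty] at hXg
            exact absurd hXg (by simp)
        have hmain := decoder_kernel hH k z hz (Tfun i) hmemb (F2 i him)
        exact hmain f ((hXmem f).2 (F1 i him f hf))
    intro f
    by_cases hfT : f ∈ T
    · rw [hTdef] at hfT
      obtain ⟨j, hjmem, hfj⟩ := Finset.mem_biUnion.1 hfT
      have hjm : j ≤ m := by
        have := Finset.mem_range.1 hjmem
        omega
      exact key j hjm f hfj
    · exact hsupp f hfT
  have hmain := card_le_of_indep H T hker
  omega
end
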